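/- arXiv:2011.02648 — 5 statements merged into one kernel-verified Lean document; each statement's English description precedes it below -/
import Mathlib

section
/- Suppose vectors x̂_0,…,x̂_N ∈ ℝ^n, ŵ_0,…,ŵ_{N−1} ∈ ℝ^l and λ_0,…,λ_N ∈ ℝ^n satisfy the two-point boundary value problem: λ_N = 0; λ_{k−1} = Aᵀλ_k − CᵀR C x̂_k + CᵀR y_k for k = 1,…,N; x̂_0 = x̄_0 + P⁻¹Aᵀλ_0; x̂_{k+1} = A x̂_k + B Q⁻¹Bᵀλ_k and ŵ_k = Q⁻¹Bᵀλ_k for k = 0,…,N−1; and set v̂_k = y_k − C x̂_k. Then for every tuple (x̃_0,…,x̃_N, w̃_0,…,w̃_{N−1}, ṽ_1,…,ṽ_N) satisfying x̃_{k+1} = A x̃_k + B w̃_k for k = 0,…,N−1 and y_k = C x̃_k + ṽ_k for k = 1,…,N, one has ½[(x̃_0 − x̄_0)ᵀP(x̃_0 − x̄_0) + Σ_{k=0}^{N−1} w̃_kᵀQ w̃_k + Σ_{k=1}^{N} ṽ_kᵀR ṽ_k] ≥ ½[(x̂_0 − x̄_0)ᵀP(x̂_0 − x̄_0) + Σ_{k=0}^{N−1}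 ŵ_kᵀQ ŵ_k + Σ_{k=1}^{N} v̂_kᵀR v̂_k], with equality only if x̃_0 = x̂_0 and w̃_k = ŵ_k for all k. -/
open Matrix Finset

private lemma my_dot_symm {p : ℕ} {M : Matrix (Fin p) (Fin p) ℝ} (hM : Mᵀ = M)
    (a b : Fin p → ℝ) : a ⬝ᵥ M *ᵥ b = b ⬝ᵥ M *ᵥ a := by
  rw [dotProduct_mulVec, ← mulVec_transpose, hM, dotProduct_comm]

private lemma my_mulVec_dot {p q : ℕ} (M : Matrix (Fin p) (Fin q) ℝ)
    (u : Fin q → ℝ) (v : Fin p → ℝ) : (M *ᵥ u) ⬝ᵥ v = u ⬝ᵥ (Mᵀ *ᵥ v) := by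
  rw [dotProduct_comm, dotProduct_mulVec, ← mulVec_transpose, dotProduct_comm]

private lemma my_quad_expand {p : ℕ} {M : Matrix (Fin p) (Fin p) ℝ} (hM : Mᵀ = M)
    (a d : Fin p → ℝ) :
    (a + d) ⬝ᵥ M *ᵥ (a + d) = a ⬝ᵥ M *ᵥ a + 2 * (d ⬝ᵥ M *ᵥ a) + d ⬝ᵥ M *ᵥ d := by
  rw [mulVec_add, dotProduct_add, add_dotProduct, add_dotProduct, my_dot_symm hM a d]
  ring

private lemma my_quad_nonneg {p : ℕ} {M : Matrix (Fin p) (Fin p) ℝ} (hM : M.PosDef)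
    (x : Fin p → ℝ) : 0 ≤ x ⬝ᵥ M *ᵥ x := by
  simpa using hM.posSemidef.dotProduct_mulVec_nonneg x

private lemma my_quad_zero {p : ℕ} {M : Matrix (Fin p) (Fin p) ℝ} (hM : M.PosDef)
    {x : Fin p → ℝ} (h : x ⬝ᵥ M *ᵥ x = 0) : x = 0 := by
  by_contra hx
  have := hM.dotProduct_mulVec_pos hx
  simp only [star_trivial] at this
  linarith

/-- **L₂-optimality of the H₂/H∞ fixed-interval smoother (Lemma 1).**
If `(x̂, ŵ, λ)` satisfies the two-point boundary value problem of the optimal smoother and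
`v̂_k = y_k − C x̂_k`, then every tuple `(x̃, w̃, ṽ)` consistent with the dynamics and the
measurements has cost at least that of `(x̂, ŵ, v̂)`, with equality only if `x̃_0 = x̂_0` and
`w̃_k = ŵ_k` for all `k`. -/
theorem smoother_L2_optimality
    (n l m N : ℕ) (hN : 1 ≤ N)
    (A : Matrix (Fin n) (Fin n) ℝ) (B : Matrix (Fin n) (Fin l) ℝ)
    (C : Matrix (Fin m) (Fin n) ℝ)
    (P : Matrix (Fin n) (Fin n) ℝ) (Q : Matrix (Fin l) (Fin l) ℝ)
    (R : Matrix (Fin m) (Fin m) ℝ)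
    (hP : P.PosDef) (hQ : Q.PosDef) (hR : R.PosDef)
    (xbar : Fin n → ℝ) (y : ℕ → Fin m → ℝ)
    (xhat : ℕ → Fin n → ℝ) (what : ℕ → Fin l → ℝ)
    (vhat : ℕ → Fin m → ℝ) (lam : ℕ → Fin n → ℝ)
    (hlamN : lam N = 0)
    (hlam : ∀ k, 1 ≤ k → k ≤ N →
      lam (k - 1) = Aᵀ *ᵥ lam k - Cᵀ *ᵥ (R *ᵥ (C *ᵥ xhat k)) + Cᵀ *ᵥ (R *ᵥ y k))
    (hx0 : xhat 0 = xbar + P⁻¹ *ᵥ (Aᵀ *ᵥ lam 0))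
    (hx : ∀ k < N, xhat (k + 1) = A *ᵥ xhat k + B *ᵥ (Q⁻¹ *ᵥ (Bᵀ *ᵥ lam k)))
    (hw : ∀ k < N, what k = Q⁻¹ *ᵥ (Bᵀ *ᵥ lam k))
    (hv : ∀ k, 1 ≤ k → k ≤ N → vhat k = y k - C *ᵥ xhat k) :
    ∀ (xt : ℕ → Fin n → ℝ) (wt : ℕ → Fin l → ℝ) (vt : ℕ → Fin m → ℝ),
      (∀ k < N, xt (k + 1) = A *ᵥ xt k + B *ᵥ wt k) →
      (∀ k, 1 ≤ k → k ≤ N → y k = C *ᵥ xt k + vt k) →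
      (1 / 2) * ((xhat 0 - xbar) ⬝ᵥ P *ᵥ (xhat 0 - xbar)
            + ∑ k ∈ Finset.range N, what k ⬝ᵥ Q *ᵥ what k
            + ∑ k ∈ Finset.Icc 1 N, vhat k ⬝ᵥ R *ᵥ vhat k)
          ≤ (1 / 2) * ((xt 0 - xbar) ⬝ᵥ P *ᵥ (xt 0 - xbar)
            + ∑ k ∈ Finset.range N, wt k ⬝ᵥ Q *ᵥ wt k
            + ∑ k ∈ Finset.Icc 1 N, vt k ⬝ᵥ R *ᵥ vt k)
      ∧ ((1 / 2) * ((xt 0 - xbar) ⬝ᵥ P *ᵥ (xt 0 - xbar)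
            + ∑ k ∈ Finset.range N, wt k ⬝ᵥ Q *ᵥ wt k
            + ∑ k ∈ Finset.Icc 1 N, vt k ⬝ᵥ R *ᵥ vt k)
          = (1 / 2) * ((xhat 0 - xbar) ⬝ᵥ P *ᵥ (xhat 0 - xbar)
            + ∑ k ∈ Finset.range N, what k ⬝ᵥ Q *ᵥ what k
            + ∑ k ∈ Finset.Icc 1 N, vhat k ⬝ᵥ R *ᵥ vhat k)
          → xt 0 = xhat 0 ∧ ∀ k < N, wt k = what k) := by
  intro xt wt vt hxt hyt
  -- symmetry of the weights
  have hPsym : Pᵀ = P := by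
    have := hP.1; rwa [Matrix.IsHermitian, conjTranspose_eq_transpose_of_trivial] at this
  have hQsym : Qᵀ = Q := by
    have := hQ.1; rwa [Matrix.IsHermitian, conjTranspose_eq_transpose_of_trivial] at this
  have hRsym : Rᵀ = R := by
    have := hR.1; rwa [Matrix.IsHermitian, conjTranspose_eq_transpose_of_trivial] at this
  -- the differences
  set dx : ℕ → Fin n → ℝ := fun k => xt k - xhat k with hdxdef
  set dw : ℕ → Fin l → ℝ := fun k => wt k - what k with hdwdef
  set dv : ℕ → Fin m → ℝ := fun k => vt k - vhat k with hdvdef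
  -- stationarity identities
  have hPinv : P * P⁻¹ = 1 := mul_nonsing_inv P (isUnit_iff_ne_zero.mpr hP.det_pos.ne')
  have hQinv : Q * Q⁻¹ = 1 := mul_nonsing_inv Q (isUnit_iff_ne_zero.mpr hQ.det_pos.ne')
  have hPx : P *ᵥ (xhat 0 - xbar) = Aᵀ *ᵥ lam 0 := by
    rw [hx0, add_sub_cancel_left, mulVec_mulVec, hPinv, one_mulVec]
  have hQw : ∀ k < N, Q *ᵥ what k = Bᵀ *ᵥ lam k := by
    intro k hk
    rw [hw k hk, mulVec_mulVec, hQinv, one_mulVec]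
  have hRv : ∀ k < N, Cᵀ *ᵥ (R *ᵥ vhat (k + 1)) = lam k - Aᵀ *ᵥ lam (k + 1) := by
    intro k hk
    have h1 := hlam (k + 1) (Nat.le_add_left 1 k) hk
    simp only [Nat.add_sub_cancel] at h1
    rw [hv (k + 1) (Nat.le_add_left 1 k) hk, mulVec_sub, mulVec_sub, h1]
    abel
  -- difference dynamics
  have hdx : ∀ k < N, dx (k + 1) = A *ᵥ dx k + B *ᵥ dw k := by
    intro k hk
    simp only [hdxdef, hdwdef]
    rw [hxt k hk, hx k hk, ← hw k hk, mulVec_sub, mulVec_sub]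
    abel
  have hdv : ∀ k < N, dv (k + 1) = -(C *ᵥ dx (k + 1)) := by
    intro k hk
    have h1 : vt (k + 1) = y (k + 1) - C *ᵥ xt (k + 1) := by
      rw [hyt (k + 1) (Nat.le_add_left 1 k) hk]; abel
    simp only [hdvdef, hdxdef]
    rw [h1, hv (k + 1) (Nat.le_add_left 1 k) hk, mulVec_sub]
    abel
  -- the telescoping cross term
  have hT : ∀ k < N,
      dw k ⬝ᵥ Q *ᵥ what k + dv (k + 1) ⬝ᵥ R *ᵥ vhat (k + 1)
        = dx (k + 1) ⬝ᵥ (Aᵀ *ᵥ lam (k + 1)) - dx k ⬝ᵥ (Aᵀ *ᵥ lam k) := by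
    intro k hk
    have h1 : dw k ⬝ᵥ Q *ᵥ what k
        = dx (k + 1) ⬝ᵥ lam k - dx k ⬝ᵥ (Aᵀ *ᵥ lam k) := by
      rw [hQw k hk, ← my_mulVec_dot B (dw k) (lam k)]
      have h2 : B *ᵥ dw k = dx (k + 1) - A *ᵥ dx k := by rw [hdx k hk]; abel
      rw [h2, sub_dotProduct, my_mulVec_dot A (dx k) (lam k)]
    have h3 : dv (k + 1) ⬝ᵥ R *ᵥ vhat (k + 1)
        = dx (k + 1) ⬝ᵥ (Aᵀ *ᵥ lam (k + 1)) - dx (k + 1) ⬝ᵥ lam k := by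
      rw [hdv k hk, neg_dotProduct, my_mulVec_dot C (dx (k + 1)) (R *ᵥ vhat (k + 1)),
        hRv k hk, dotProduct_sub]
      ring
    rw [h1, h3]; ring
  have hcross : dx 0 ⬝ᵥ (Aᵀ *ᵥ lam 0)
      + (∑ k ∈ Finset.range N, dw k ⬝ᵥ Q *ᵥ what k
        + ∑ k ∈ Finset.range N, dv (k + 1) ⬝ᵥ R *ᵥ vhat (k + 1)) = 0 := by
    have hsum : ∑ k ∈ Finset.range N, (dw k ⬝ᵥ Q *ᵥ what k + dv (k + 1) ⬝ᵥ R *ᵥ vhat (k + 1))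
        = dx N ⬝ᵥ (Aᵀ *ᵥ lam N) - dx 0 ⬝ᵥ (Aᵀ *ᵥ lam 0) := by
      rw [Finset.sum_congr rfl (fun k hk => hT k (Finset.mem_range.mp hk))]
      exact Finset.sum_range_sub (fun k => dx k ⬝ᵥ (Aᵀ *ᵥ lam k)) N
    rw [← Finset.sum_add_distrib, hsum, hlamN]
    simp
  -- convert Icc sums to range sums
  have hIcc : ∀ (g : ℕ → ℝ), ∑ k ∈ Finset.Icc 1 N, g k = ∑ k ∈ Finset.range N, g (k + 1) := by
    intro g
    rw [← Finset.Ico_add_one_right_eq_Icc, Finset.sum_Ico_eq_sum_range]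
    simp [add_comm]
  -- decompositions of the candidate variables
  have hx0d : xt 0 - xbar = (xhat 0 - xbar) + dx 0 := by simp [hdxdef]
  have hwd : ∀ k, wt k = what k + dw k := by intro k; simp [hdwdef]
  have hvd : ∀ k, vt k = vhat k + dv k := by intro k; simp [hdvdef]
  -- the main cost expansion
  set Jh : ℝ := (xhat 0 - xbar) ⬝ᵥ P *ᵥ (xhat 0 - xbar)
      + ∑ k ∈ Finset.range N, what k ⬝ᵥ Q *ᵥ what k
      + ∑ k ∈ Finset.Icc 1 N, vhat k ⬝ᵥ R *ᵥ vhat k with hJh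
  set D : ℝ := dx 0 ⬝ᵥ P *ᵥ dx 0 + ∑ k ∈ Finset.range N, dw k ⬝ᵥ Q *ᵥ dw k
      + ∑ k ∈ Finset.range N, dv (k + 1) ⬝ᵥ R *ᵥ dv (k + 1) with hD
  have hexp : (xt 0 - xbar) ⬝ᵥ P *ᵥ (xt 0 - xbar)
      + ∑ k ∈ Finset.range N, wt k ⬝ᵥ Q *ᵥ wt k
      + ∑ k ∈ Finset.Icc 1 N, vt k ⬝ᵥ R *ᵥ vt k = Jh + D := by
    have e1 : (xt 0 - xbar) ⬝ᵥ P *ᵥ (xt 0 - xbar)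
        = (xhat 0 - xbar) ⬝ᵥ P *ᵥ (xhat 0 - xbar)
          + 2 * (dx 0 ⬝ᵥ P *ᵥ (xhat 0 - xbar)) + dx 0 ⬝ᵥ P *ᵥ dx 0 := by
      rw [hx0d, my_quad_expand hPsym]
    have e2 : ∀ k, wt k ⬝ᵥ Q *ᵥ wt k
        = what k ⬝ᵥ Q *ᵥ what k + 2 * (dw k ⬝ᵥ Q *ᵥ what k) + dw k ⬝ᵥ Q *ᵥ dw k := by
      intro k; rw [hwd k, my_quad_expand hQsym]
    have e3 : ∀ k, vt k ⬝ᵥ R *ᵥ vt k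
        = vhat k ⬝ᵥ R *ᵥ vhat k + 2 * (dv k ⬝ᵥ R *ᵥ vhat k) + dv k ⬝ᵥ R *ᵥ dv k := by
      intro k; rw [hvd k, my_quad_expand hRsym]
    have hPx' : dx 0 ⬝ᵥ P *ᵥ (xhat 0 - xbar) = dx 0 ⬝ᵥ (Aᵀ *ᵥ lam 0) := by rw [hPx]
    rw [hJh, hD, e1, hIcc (fun k => vt k ⬝ᵥ R *ᵥ vt k),
      hIcc (fun k => vhat k ⬝ᵥ R *ᵥ vhat k),
      Finset.sum_congr rfl (fun k _ => e2 k),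
      Finset.sum_congr rfl (fun (k : ℕ) _ => e3 (k + 1))]
    simp only [Finset.sum_add_distrib, ← Finset.mul_sum]
    rw [hPx']
    linarith [hcross]
  -- nonnegativity of the pieces of D
  have hD1 : 0 ≤ dx 0 ⬝ᵥ P *ᵥ dx 0 := my_quad_nonneg hP _
  have hD2 : 0 ≤ ∑ k ∈ Finset.range N, dw k ⬝ᵥ Q *ᵥ dw k :=
    Finset.sum_nonneg fun k _ => my_quad_nonneg hQ _
  have hD3 : 0 ≤ ∑ k ∈ Finset.range N, dv (k + 1) ⬝ᵥ R *ᵥ dv (k + 1) :=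
    Finset.sum_nonneg fun k _ => my_quad_nonneg hR _
  constructor
  · rw [hexp]
    have : 0 ≤ D := by rw [hD]; linarith
    linarith
  · intro heq
    rw [hexp] at heq
    have hD0 : D = 0 := by linarith
    rw [hD] at hD0
    have hq1 : dx 0 ⬝ᵥ P *ᵥ dx 0 = 0 := by linarith
    have hq2 : ∑ k ∈ Finset.range N, dw k ⬝ᵥ Q *ᵥ dw k = 0 := by linarith
    constructor
    · have := my_quad_zero hP hq1
      have : xt 0 - xhat 0 = 0 := this
      exact sub_eq_zero.mp this
    · intro k hk
      have := (Finset.sum_eq_zero_iff_of_nonneg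
        (fun i _ => my_quad_nonneg hQ (dw i))).mp hq2 k (Finset.mem_range.mpr hk)
      have := my_quad_zero hQ this
      have : wt k - what k = 0 := this
      exact sub_eq_zero.mp this
end

section
/- Let (Θ̂, ζ̂) ∈ ℝ^{Nm}×ℝ^{Nm} maximize D(Θ, ζ) = −½ΘᵀMΘ − ε̄ᵀζ + ΘᵀY over all (Θ, ζ) satisfying ζ ≥ Θ and ζ ≥ −Θ componentwise. Write Θ̂ = (θ̂_1,…,θ̂_N) with θ̂_k ∈ ℝ^m, and define λ_0,…,λ_N ∈ ℝ^n by λ_N = 0 and λ_{k−1} = Aᵀλ_k + Cᵀθ̂_k for k = 1,…,N; define x̂_0 = x̄_0 + P⁻¹Aᵀλ_0, x̂_{k+1} = A x̂_k + B Q⁻¹Bᵀλ_k, ŵ_k = Q⁻¹Bᵀλ_k for k = 0,…,N−1, and η_k = y_k − C x̂_k − R⁻¹θ̂_k for k = 1,…,N. Then |η_k| ≤ ε componentwise for every k, and (x̂_0, ŵ, η) minimizes the ε-insensitive cost J over all feasible tuples, i.e. J(x̂_0, ŵ, η) ≤ J(x̃_0, w̃, η̃) for every x̃_0 ∈ ℝ^n,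 w̃_0,…,w̃_{N−1} ∈ ℝ^l and η̃_1,…,η̃_N with |η̃_k| ≤ ε componentwise. -/
open Matrix

/-- State trajectory generated by `x_{k+1} = A x_k + B w_k` from initial state `x0`. -/
def traj {n l : ℕ} (A : Matrix (Fin n) (Fin n) ℝ) (B : Matrix (Fin n) (Fin l) ℝ)
    (x0 : Fin n → ℝ) (w : ℕ → Fin l → ℝ) : ℕ → Fin n → ℝ
  | 0 => x0
  | k + 1 => A *ᵥ traj A B x0 w k + B *ᵥ w k

/-- The ε-insensitive cost
`J(x0, w, η) = ½[(x0 − x̄0)ᵀP(x0 − x̄0) + Σ w_kᵀQw_k + Σ (y_k − C x_k − η_k)ᵀR(y_k − C x_k − η_k)]`,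
where `x_1, …, x_N` are generated from `x0, w` by the dynamics. -/
noncomputable def epsCost {n l m : ℕ} (N : ℕ)
    (A : Matrix (Fin n) (Fin n) ℝ) (B : Matrix (Fin n) (Fin l) ℝ)
    (C : Matrix (Fin m) (Fin n) ℝ)
    (P : Matrix (Fin n) (Fin n) ℝ) (Q : Matrix (Fin l) (Fin l) ℝ)
    (R : Matrix (Fin m) (Fin m) ℝ)
    (xbar : Fin n → ℝ) (y : ℕ → Fin m → ℝ)
    (x0 : Fin n → ℝ) (w : ℕ → Fin l → ℝ) (η : Fin N → Fin m → ℝ) : ℝ :=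
  (1 / 2) * ((x0 - xbar) ⬝ᵥ P *ᵥ (x0 - xbar)
    + ∑ k ∈ Finset.range N, w k ⬝ᵥ Q *ᵥ w k
    + ∑ k : Fin N,
        (y ((k : ℕ) + 1) - C *ᵥ traj A B x0 w ((k : ℕ) + 1) - η k) ⬝ᵥ
          R *ᵥ (y ((k : ℕ) + 1) - C *ᵥ traj A B x0 w ((k : ℕ) + 1) - η k))

/-- The block lower-triangular matrix `F` whose `(k, i)` block is `C A^{k−1−i} B` (1-based row
block `k`, 0-based column block `i`, nonzero iff `i ≤ k − 1`). -/
def Fmat {n l m : ℕ} (N : ℕ) (A : Matrix (Fin n) (Fin n) ℝ) (B : Matrix (Fin n) (Fin l) ℝ)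
    (C : Matrix (Fin m) (Fin n) ℝ) : Matrix (Fin N × Fin m) (Fin N × Fin l) ℝ :=
  fun p q => if (q.1 : ℕ) ≤ (p.1 : ℕ) then (C * A ^ ((p.1 : ℕ) - (q.1 : ℕ)) * B) p.2 q.2 else 0

/-- Block-diagonal matrix with `N` diagonal blocks `Q⁻¹`. -/
noncomputable def Qinv {l : ℕ} (N : ℕ) (Q : Matrix (Fin l) (Fin l) ℝ) :
    Matrix (Fin N × Fin l) (Fin N × Fin l) ℝ :=
  fun p q => if p.1 = q.1 then Q⁻¹ p.2 q.2 else 0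

/-- Block-diagonal matrix with `N` diagonal blocks `R⁻¹`. -/
noncomputable def Rinv {m : ℕ} (N : ℕ) (R : Matrix (Fin m) (Fin m) ℝ) :
    Matrix (Fin N × Fin m) (Fin N × Fin m) ℝ :=
  fun p q => if p.1 = q.1 then R⁻¹ p.2 q.2 else 0

/-- The vertical stack `O` of `C A, C A², …, C A^N`. -/
def Omat {n m : ℕ} (N : ℕ) (A : Matrix (Fin n) (Fin n) ℝ) (C : Matrix (Fin m) (Fin n) ℝ) :
    Matrix (Fin N × Fin m) (Fin n) ℝ :=
  fun p c => (C * A ^ ((p.1 : ℕ) + 1)) p.2 c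

/-- The stacked vector `Y` of `y_k − C A^k x̄0`, `k = 1, …, N`. -/
def Yvec {n m : ℕ} (N : ℕ) (A : Matrix (Fin n) (Fin n) ℝ) (C : Matrix (Fin m) (Fin n) ℝ)
    (xbar : Fin n → ℝ) (y : ℕ → Fin m → ℝ) : (Fin N × Fin m) → ℝ :=
  fun p => y ((p.1 : ℕ) + 1) p.2 - ((C * A ^ ((p.1 : ℕ) + 1)) *ᵥ xbar) p.2

/-- `M = F Q_inv Fᵀ + R_inv + O P⁻¹ Oᵀ`. -/
noncomputable def Mmat {n l m : ℕ} (N : ℕ)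
    (A : Matrix (Fin n) (Fin n) ℝ) (B : Matrix (Fin n) (Fin l) ℝ)
    (C : Matrix (Fin m) (Fin n) ℝ)
    (P : Matrix (Fin n) (Fin n) ℝ) (Q : Matrix (Fin l) (Fin l) ℝ)
    (R : Matrix (Fin m) (Fin m) ℝ) : Matrix (Fin N × Fin m) (Fin N × Fin m) ℝ :=
  Fmat N A B C * Qinv N Q * (Fmat N A B C)ᵀ + Rinv N R + Omat N A C * P⁻¹ * (Omat N A C)ᵀ


section AuxLemmas

open Matrix

variable {n l m N : ℕ}

lemma my_mulVec_sum {a b : ℕ} {α : Type*} (M : Matrix (Fin a) (Fin b) ℝ) (s : Finset α)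
    (f : α → Fin b → ℝ) : M *ᵥ (∑ i ∈ s, f i) = ∑ i ∈ s, M *ᵥ f i := by
  classical
  induction s using Finset.induction with
  | empty => simp
  | insert a s h ih => simp [Finset.sum_insert h, Matrix.mulVec_add, ih]

lemma my_mul_inv {k : ℕ} {P : Matrix (Fin k) (Fin k) ℝ} (hP : P.PosDef) : P * P⁻¹ = 1 :=
  Matrix.mul_nonsing_inv _ (isUnit_iff_ne_zero.2 (ne_of_gt hP.det_pos))

lemma my_transpose_eq {k : ℕ} {P : Matrix (Fin k) (Fin k) ℝ} (hP : P.PosDef) : Pᵀ = P := by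
  simpa using hP.1.eq

lemma my_inv_transpose_eq {k : ℕ} {P : Matrix (Fin k) (Fin k) ℝ} (hP : P.PosDef) :
    (P⁻¹)ᵀ = P⁻¹ := by
  rw [Matrix.transpose_nonsing_inv, my_transpose_eq hP]

lemma my_quad_nonneg_s1 {k : ℕ} {P : Matrix (Fin k) (Fin k) ℝ} (hP : P.PosDef) (x : Fin k → ℝ) :
    0 ≤ x ⬝ᵥ P *ᵥ x := by simpa using hP.posSemidef.dotProduct_mulVec_nonneg x

lemma my_dot_swap' {ι : Type*} [Fintype ι] (M : Matrix ι ι ℝ) (hM : Mᵀ = M) (x y : ι → ℝ) :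
    x ⬝ᵥ M *ᵥ y = y ⬝ᵥ M *ᵥ x := by
  rw [Matrix.dotProduct_mulVec, ← Matrix.mulVec_transpose, hM, dotProduct_comm]

lemma my_dot_swap {k : ℕ} {P : Matrix (Fin k) (Fin k) ℝ} (hP : P.PosDef) (x y : Fin k → ℝ) :
    x ⬝ᵥ P *ᵥ y = y ⬝ᵥ P *ᵥ x := my_dot_swap' P (my_transpose_eq hP) x y

lemma my_quad_inv {k : ℕ} {P : Matrix (Fin k) (Fin k) ℝ} (hP : P.PosDef) (a : Fin k → ℝ) :
    (P⁻¹ *ᵥ a) ⬝ᵥ P *ᵥ (P⁻¹ *ᵥ a) = a ⬝ᵥ P⁻¹ *ᵥ a := by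
  rw [Matrix.mulVec_mulVec, my_mul_inv hP, Matrix.one_mulVec, Matrix.dotProduct_mulVec,
    ← Matrix.mulVec_transpose, my_inv_transpose_eq hP, dotProduct_comm]

/-- Fenchel-Young inequality for a positive-definite quadratic form. -/
lemma my_fenchel {k : ℕ} {P : Matrix (Fin k) (Fin k) ℝ} (hP : P.PosDef) (a δ : Fin k → ℝ) :
    a ⬝ᵥ δ ≤ (1/2) * (δ ⬝ᵥ P *ᵥ δ) + (1/2) * (a ⬝ᵥ P⁻¹ *ᵥ a) := by
  have h0 := my_quad_nonneg_s1 hP (δ - P⁻¹ *ᵥ a)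
  have hPa : P *ᵥ (P⁻¹ *ᵥ a) = a := by
    rw [Matrix.mulVec_mulVec, my_mul_inv hP, Matrix.one_mulVec]
  have hcross : (P⁻¹ *ᵥ a) ⬝ᵥ P *ᵥ δ = a ⬝ᵥ δ := by
    rw [my_dot_swap hP, hPa, dotProduct_comm]
  have h1 : δ ⬝ᵥ P *ᵥ (P⁻¹ *ᵥ a) = a ⬝ᵥ δ := by
    rw [hPa, dotProduct_comm]
  have h2 := my_quad_inv hP a
  rw [Matrix.mulVec_sub, sub_dotProduct, dotProduct_sub, dotProduct_sub,
    h1, hcross, h2] at h0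
  linarith

lemma traj_formula (A : Matrix (Fin n) (Fin n) ℝ) (B : Matrix (Fin n) (Fin l) ℝ)
    (x0 : Fin n → ℝ) (w : ℕ → Fin l → ℝ) (k : ℕ) :
    traj A B x0 w (k + 1)
      = (A ^ (k + 1)) *ᵥ x0 + ∑ i ∈ Finset.range (k + 1), (A ^ (k - i)) *ᵥ (B *ᵥ w i) := by
  induction k with
  | zero => simp [traj]
  | succ k ih =>
      show A *ᵥ traj A B x0 w (k + 1) + B *ᵥ w (k + 1) = _
      have h1 : A *ᵥ (A ^ (k+1)) *ᵥ x0 = (A ^ (k+1+1)) *ᵥ x0 := by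
        rw [Matrix.mulVec_mulVec, ← pow_succ']
      have h2 : ∀ i ∈ Finset.range (k+1),
          A *ᵥ ((A ^ (k - i)) *ᵥ (B *ᵥ w i)) = (A ^ (k + 1 - i)) *ᵥ (B *ᵥ w i) := by
        intro i hi
        have hik : i ≤ k := Nat.lt_succ_iff.1 (Finset.mem_range.1 hi)
        rw [Matrix.mulVec_mulVec, ← pow_succ']
        have : k - i + 1 = k + 1 - i := by omega
        rw [this]
      have hR : ∑ i ∈ Finset.range (k + 1 + 1), (A ^ (k + 1 - i)) *ᵥ (B *ᵥ w i)
          = (∑ i ∈ Finset.range (k+1), (A ^ (k + 1 - i)) *ᵥ (B *ᵥ w i)) + B *ᵥ w (k+1) := by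
        rw [Finset.sum_range_succ]; simp
      rw [ih, Matrix.mulVec_add, my_mulVec_sum, Finset.sum_congr rfl h2, h1, hR, add_assoc]

lemma fin_ite_sum {M : Type*} [AddCommMonoid M] (N k : ℕ) (hk : k < N) (f : ℕ → M) :
    (∑ j : Fin N, (if (j : ℕ) ≤ k then f (j : ℕ) else 0)) = ∑ j ∈ Finset.range (k + 1), f j := by
  rw [Fin.sum_univ_eq_sum_range (fun j => if j ≤ k then f j else 0) N]
  have hsub : Finset.range (k+1) ⊆ Finset.range N := Finset.range_subset_range.2 (by omega)
  rw [← Finset.sum_subset hsub (fun j _ hj2 =>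
    if_neg (fun hle => hj2 (Finset.mem_range.2 (by omega))))]
  exact Finset.sum_congr rfl (fun j hj =>
    if_pos (Nat.lt_succ_iff.1 (Finset.mem_range.1 hj)))

/-- extract the `k`-th block of a stacked vector -/
def blk {N m : ℕ} (v : Fin N × Fin m → ℝ) (k : Fin N) : Fin m → ℝ := fun i => v (k, i)

lemma dot_split (x v : Fin N × Fin m → ℝ) :
    x ⬝ᵥ v = ∑ k : Fin N, blk x k ⬝ᵥ blk v k := by
  simp [dotProduct, blk, Fintype.sum_prod_type]

lemma my_sandwich {ι κ : Type*} [Fintype ι] [Fintype κ] [DecidableEq ι] [DecidableEq κ]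
    (X : Matrix ι κ ℝ) (D : Matrix κ κ ℝ) (v : ι → ℝ) :
    v ⬝ᵥ (X * D * Xᵀ) *ᵥ v = (Xᵀ *ᵥ v) ⬝ᵥ (D *ᵥ (Xᵀ *ᵥ v)) := by
  rw [← Matrix.mulVec_mulVec, ← Matrix.mulVec_mulVec, Matrix.dotProduct_mulVec,
    ← Matrix.mulVec_transpose]

lemma Qinv_mulVec (Q : Matrix (Fin l) (Fin l) ℝ) (v : Fin N × Fin l → ℝ) (k : Fin N) :
    blk (Qinv N Q *ᵥ v) k = Q⁻¹ *ᵥ blk v k := by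
  funext j
  simp [Qinv, blk, Matrix.mulVec, dotProduct, Fintype.sum_prod_type, ite_mul, zero_mul,
    Finset.mul_sum, Finset.sum_ite_eq]

lemma Rinv_mulVec (R : Matrix (Fin m) (Fin m) ℝ) (v : Fin N × Fin m → ℝ) (k : Fin N) :
    blk (Rinv N R *ᵥ v) k = R⁻¹ *ᵥ blk v k := by
  funext j
  simp [Rinv, blk, Matrix.mulVec, dotProduct, Fintype.sum_prod_type, ite_mul, zero_mul,
    Finset.mul_sum, Finset.sum_ite_eq]

lemma Ot_mulVec (A : Matrix (Fin n) (Fin n) ℝ) (C : Matrix (Fin m) (Fin n) ℝ)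
    (Θ : Fin N × Fin m → ℝ) :
    (Omat N A C)ᵀ *ᵥ Θ = ∑ k : Fin N, (Aᵀ) ^ ((k : ℕ) + 1) *ᵥ (Cᵀ *ᵥ blk Θ k) := by
  have h : ∀ k : Fin N, (Aᵀ) ^ ((k : ℕ)+1) *ᵥ (Cᵀ *ᵥ blk Θ k)
      = (C * A ^ ((k : ℕ)+1))ᵀ *ᵥ blk Θ k := by
    intro k
    rw [Matrix.mulVec_mulVec, ← Matrix.transpose_pow, ← Matrix.transpose_mul]
  funext c
  simp only [h, Matrix.mulVec_transpose, Finset.sum_apply]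
  simp only [Omat, Matrix.mulVec, Matrix.vecMul, dotProduct, Fintype.sum_prod_type, blk,
    Matrix.transpose_apply, Matrix.mul_apply, ← Matrix.transpose_pow, Finset.sum_mul,
    Finset.mul_sum]
  refine Finset.sum_congr rfl (fun k _ => ?_)
  rw [Finset.sum_comm]
  refine Finset.sum_congr rfl (fun i _ => Finset.sum_congr rfl (fun c' _ => by ring))

lemma Ft_mulVec (A : Matrix (Fin n) (Fin n) ℝ) (B : Matrix (Fin n) (Fin l) ℝ)
    (C : Matrix (Fin m) (Fin n) ℝ) (Θ : Fin N × Fin m → ℝ) (j : Fin N) :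
    blk ((Fmat N A B C)ᵀ *ᵥ Θ) j
      = ∑ k : Fin N, (if (j : ℕ) ≤ (k : ℕ) then
          Bᵀ *ᵥ ((Aᵀ) ^ ((k : ℕ) - (j : ℕ)) *ᵥ (Cᵀ *ᵥ blk Θ k)) else 0) := by
  have h : ∀ k : Fin N, Bᵀ *ᵥ ((Aᵀ) ^ ((k : ℕ) - (j : ℕ)) *ᵥ (Cᵀ *ᵥ blk Θ k))
      = (C * A ^ ((k : ℕ) - (j : ℕ)) * B)ᵀ *ᵥ blk Θ k := by
    intro k
    rw [Matrix.mulVec_mulVec, Matrix.mulVec_mulVec, ← Matrix.transpose_pow,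
      ← Matrix.transpose_mul, ← Matrix.transpose_mul, Matrix.mul_assoc]
  funext s
  simp only [h, Matrix.mulVec_transpose, Finset.sum_apply, ite_apply, Pi.zero_apply]
  simp only [Fmat, Matrix.mulVec, Matrix.vecMul, dotProduct, Fintype.sum_prod_type, blk,
    Matrix.transpose_apply, Matrix.mul_apply, ← Matrix.transpose_pow, Finset.sum_mul,
    Finset.mul_sum, ite_mul, zero_mul]
  refine Finset.sum_congr rfl (fun k _ => ?_)
  by_cases hjk : (j : ℕ) ≤ (k : ℕ)
  · simp only [if_pos hjk, Finset.mul_sum]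
    rw [Finset.sum_comm]
    refine Finset.sum_congr rfl (fun x1 _ => ?_)
    rw [Finset.sum_comm]
    refine Finset.sum_congr rfl (fun x2 _ => Finset.sum_congr rfl (fun x _ => by ring))
  · simp [hjk]


end AuxLemmas

section AuxLemmas2

open Matrix

variable {n l m N : ℕ}

lemma lam_formula (A : Matrix (Fin n) (Fin n) ℝ) (C : Matrix (Fin m) (Fin n) ℝ)
    (Θhat : Fin N × Fin m → ℝ) (lam : ℕ → Fin n → ℝ) (hlamN : lam N = 0)
    (hlam : ∀ k : Fin N, lam (k : ℕ) = Aᵀ *ᵥ lam ((k : ℕ) + 1) + Cᵀ *ᵥ blk Θhat k) :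
    ∀ d j, j + d = N →
      lam j = ∑ k : Fin N,
        (if j ≤ (k : ℕ) then (Aᵀ) ^ ((k : ℕ) - j) *ᵥ (Cᵀ *ᵥ blk Θhat k) else 0) := by
  intro d
  induction d with
  | zero =>
      intro j hj
      have : j = N := by omega
      subst this
      rw [hlamN]
      symm
      apply Finset.sum_eq_zero
      intro k _
      exact if_neg (fun hc => absurd k.2 (by omega))
  | succ d ih =>
      intro j hj
      have hjN : j < N := by omega
      have hrec := hlam ⟨j, hjN⟩
      simp only [Fin.val_mk] at hrec
      rw [hrec, ih (j+1) (by omega), my_mulVec_sum]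
      have h1 : ∀ k : Fin N,
          Aᵀ *ᵥ (if j + 1 ≤ (k : ℕ) then (Aᵀ) ^ ((k : ℕ) - (j+1)) *ᵥ (Cᵀ *ᵥ blk Θhat k) else 0)
          = (if j + 1 ≤ (k : ℕ) then (Aᵀ) ^ ((k : ℕ) - j) *ᵥ (Cᵀ *ᵥ blk Θhat k) else 0) := by
        intro k
        by_cases hk : j + 1 ≤ (k : ℕ)
        · rw [if_pos hk, if_pos hk, Matrix.mulVec_mulVec, ← pow_succ']
          have : (k : ℕ) - (j+1) + 1 = (k : ℕ) - j := by omega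
          rw [this]
        · rw [if_neg hk, if_neg hk, Matrix.mulVec_zero]
      rw [Finset.sum_congr rfl (fun k _ => h1 k)]
      have h2 : ∀ k : Fin N,
          (if j ≤ (k : ℕ) then (Aᵀ) ^ ((k : ℕ) - j) *ᵥ (Cᵀ *ᵥ blk Θhat k) else 0)
          = (if j + 1 ≤ (k : ℕ) then (Aᵀ) ^ ((k : ℕ) - j) *ᵥ (Cᵀ *ᵥ blk Θhat k) else 0)
            + (if k = ⟨j, hjN⟩ then (Aᵀ) ^ ((k : ℕ) - j) *ᵥ (Cᵀ *ᵥ blk Θhat k) else 0) := by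
        intro k
        by_cases hkj : (k : ℕ) = j
        · have hk : k = ⟨j, hjN⟩ := Fin.ext hkj
          subst hk
          rw [if_pos (le_of_eq hkj.symm), if_neg (by omega), if_pos rfl, zero_add]
        · have hne : k ≠ ⟨j, hjN⟩ := fun hc => hkj (by rw [hc])
          rw [if_neg hne, add_zero]
          by_cases hk2 : j ≤ (k : ℕ)
          · rw [if_pos hk2, if_pos (by omega)]
          · rw [if_neg hk2, if_neg (by omega)]
      rw [Finset.sum_congr rfl (fun k _ => h2 k), Finset.sum_add_distrib,
        Finset.sum_ite_eq' Finset.univ (⟨j, hjN⟩ : Fin N)]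
      simp [Nat.sub_self]

lemma resid_formula (A : Matrix (Fin n) (Fin n) ℝ) (B : Matrix (Fin n) (Fin l) ℝ)
    (C : Matrix (Fin m) (Fin n) ℝ) (xbar : Fin n → ℝ) (y : ℕ → Fin m → ℝ)
    (x0 : Fin n → ℝ) (w : ℕ → Fin l → ℝ) (p : Fin N × Fin m) :
    y ((p.1 : ℕ) + 1) p.2 - (C *ᵥ traj A B x0 w ((p.1 : ℕ) + 1)) p.2
      = Yvec N A C xbar y p - (Omat N A C *ᵥ (x0 - xbar)) p
        - (Fmat N A B C *ᵥ (fun q => w (q.1 : ℕ) q.2)) p := by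
  obtain ⟨k, i⟩ := p
  have hO : (Omat N A C *ᵥ (x0 - xbar)) (k, i)
      = ((C * A ^ ((k : ℕ) + 1)) *ᵥ x0) i - ((C * A ^ ((k : ℕ) + 1)) *ᵥ xbar) i := by
    simp [Omat, Matrix.mulVec, dotProduct, Pi.sub_apply, mul_sub,
      Finset.sum_sub_distrib]
  have hF : (Fmat N A B C *ᵥ (fun q => w (q.1 : ℕ) q.2)) (k, i)
      = ∑ jj ∈ Finset.range ((k : ℕ) + 1), ((C * A ^ ((k : ℕ) - jj) * B) *ᵥ w jj) i := by
    have e1 : (Fmat N A B C *ᵥ (fun q => w (q.1 : ℕ) q.2)) (k, i)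
        = ∑ j : Fin N, (if (j : ℕ) ≤ (k : ℕ)
            then ((C * A ^ ((k : ℕ) - (j : ℕ)) * B) *ᵥ w (j : ℕ)) i else 0) := by
      simp [Fmat, Matrix.mulVec, dotProduct, Fintype.sum_prod_type, ite_mul, zero_mul,
        Finset.mul_sum]
    rw [e1]
    exact fin_ite_sum N (k : ℕ) k.2 (fun jj => ((C * A ^ ((k : ℕ) - jj) * B) *ᵥ w jj) i)
  have hC : (C *ᵥ traj A B x0 w ((k : ℕ) + 1)) i
      = ((C * A ^ ((k : ℕ) + 1)) *ᵥ x0) i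
        + ∑ jj ∈ Finset.range ((k : ℕ) + 1), ((C * A ^ ((k : ℕ) - jj) * B) *ᵥ w jj) i := by
    rw [traj_formula, Matrix.mulVec_add, my_mulVec_sum]
    simp only [Matrix.mulVec_mulVec, Pi.add_apply, Finset.sum_apply, Matrix.mul_assoc]
  simp only [Yvec, hO, hF, hC, Pi.sub_apply]
  ring

lemma Qinv_symm (Q : Matrix (Fin l) (Fin l) ℝ) (hQ : Q.PosDef) : (Qinv N Q)ᵀ = Qinv N Q := by
  have h := my_inv_transpose_eq hQ
  funext p q
  simp only [Matrix.transpose_apply, Qinv]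
  by_cases hpq : p.1 = q.1
  · rw [if_pos hpq.symm, if_pos hpq]
    exact congrFun (congrFun h p.2) q.2
  · rw [if_neg (fun hc => hpq hc.symm), if_neg hpq]

lemma Rinv_symm (R : Matrix (Fin m) (Fin m) ℝ) (hR : R.PosDef) : (Rinv N R)ᵀ = Rinv N R := by
  have h := my_inv_transpose_eq hR
  funext p q
  simp only [Matrix.transpose_apply, Rinv]
  by_cases hpq : p.1 = q.1
  · rw [if_pos hpq.symm, if_pos hpq]
    exact congrFun (congrFun h p.2) q.2
  · rw [if_neg (fun hc => hpq hc.symm), if_neg hpq]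

lemma sandwich_transpose {ι κ : Type*} [Fintype ι] [Fintype κ] (X : Matrix ι κ ℝ)
    (D : Matrix κ κ ℝ) (hD : Dᵀ = D) : (X * D * Xᵀ)ᵀ = X * D * Xᵀ := by
  rw [Matrix.transpose_mul, Matrix.transpose_mul, Matrix.transpose_transpose, hD,
    ← Matrix.mul_assoc]

lemma M_symm (A : Matrix (Fin n) (Fin n) ℝ) (B : Matrix (Fin n) (Fin l) ℝ)
    (C : Matrix (Fin m) (Fin n) ℝ) {P : Matrix (Fin n) (Fin n) ℝ}
    {Q : Matrix (Fin l) (Fin l) ℝ} {R : Matrix (Fin m) (Fin m) ℝ}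
    (hP : P.PosDef) (hQ : Q.PosDef) (hR : R.PosDef) :
    (Mmat N A B C P Q R)ᵀ = Mmat N A B C P Q R := by
  unfold Mmat
  rw [Matrix.transpose_add, Matrix.transpose_add,
    sandwich_transpose _ _ (Qinv_symm Q hQ),
    sandwich_transpose _ _ (my_inv_transpose_eq hP), Rinv_symm R hR]

lemma M_quad_nonneg (A : Matrix (Fin n) (Fin n) ℝ) (B : Matrix (Fin n) (Fin l) ℝ)
    (C : Matrix (Fin m) (Fin n) ℝ) {P : Matrix (Fin n) (Fin n) ℝ}
    {Q : Matrix (Fin l) (Fin l) ℝ} {R : Matrix (Fin m) (Fin m) ℝ}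
    (hP : P.PosDef) (hQ : Q.PosDef) (hR : R.PosDef) (x : Fin N × Fin m → ℝ) :
    0 ≤ x ⬝ᵥ Mmat N A B C P Q R *ᵥ x := by
  unfold Mmat
  rw [Matrix.add_mulVec, Matrix.add_mulVec, dotProduct_add, dotProduct_add]
  have h1 : 0 ≤ x ⬝ᵥ (Fmat N A B C * Qinv N Q * (Fmat N A B C)ᵀ) *ᵥ x := by
    rw [my_sandwich]
    rw [dot_split]
    apply Finset.sum_nonneg
    intro k _
    rw [Qinv_mulVec]
    exact my_quad_nonneg_s1 hQ.inv _
  have h2 : 0 ≤ x ⬝ᵥ Rinv N R *ᵥ x := by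
    rw [dot_split]
    apply Finset.sum_nonneg
    intro k _
    rw [Rinv_mulVec]
    exact my_quad_nonneg_s1 hR.inv _
  have h3 : 0 ≤ x ⬝ᵥ (Omat N A C * P⁻¹ * (Omat N A C)ᵀ) *ᵥ x := by
    rw [my_sandwich]
    exact my_quad_nonneg_s1 hP.inv _
  linarith

end AuxLemmas2

section AuxLemmas3

open Matrix

variable {n l m N : ℕ}

lemma weak_duality (A : Matrix (Fin n) (Fin n) ℝ) (B : Matrix (Fin n) (Fin l) ℝ)
    (C : Matrix (Fin m) (Fin n) ℝ) {P : Matrix (Fin n) (Fin n) ℝ}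
    {Q : Matrix (Fin l) (Fin l) ℝ} {R : Matrix (Fin m) (Fin m) ℝ}
    (hP : P.PosDef) (hQ : Q.PosDef) (hR : R.PosDef)
    (xbar : Fin n → ℝ) (y : ℕ → Fin m → ℝ) (Θ : Fin N × Fin m → ℝ)
    (x0 : Fin n → ℝ) (w : ℕ → Fin l → ℝ) (ηt : Fin N → Fin m → ℝ) :
    Θ ⬝ᵥ Yvec N A C xbar y - Θ ⬝ᵥ (fun q => ηt q.1 q.2)
        - (1/2) * (Θ ⬝ᵥ Mmat N A B C P Q R *ᵥ Θ)
      ≤ epsCost N A B C P Q R xbar y x0 w ηt := by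
  set δ : Fin n → ℝ := x0 - xbar with hδ
  set a : Fin n → ℝ := (Omat N A C)ᵀ *ᵥ Θ with ha
  set b : Fin N × Fin l → ℝ := (Fmat N A B C)ᵀ *ᵥ Θ with hb
  set wst : Fin N × Fin l → ℝ := fun q => w (q.1 : ℕ) q.2 with hwst
  set ηst : Fin N × Fin m → ℝ := fun q => ηt q.1 q.2 with hηst
  set r : Fin N × Fin m → ℝ :=
    fun p => y ((p.1 : ℕ) + 1) p.2 - (C *ᵥ traj A B x0 w ((p.1 : ℕ) + 1)) p.2 with hr
  have F1 : a ⬝ᵥ δ ≤ (1/2) * (δ ⬝ᵥ P *ᵥ δ)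
      + (1/2) * (Θ ⬝ᵥ (Omat N A C * P⁻¹ * (Omat N A C)ᵀ) *ᵥ Θ) := by
    have h := my_fenchel hP a δ
    rwa [show a ⬝ᵥ P⁻¹ *ᵥ a = Θ ⬝ᵥ (Omat N A C * P⁻¹ * (Omat N A C)ᵀ) *ᵥ Θ from
      (my_sandwich (Omat N A C) P⁻¹ Θ).symm] at h
  have F2 : b ⬝ᵥ wst ≤ (1/2) * (∑ k : Fin N, w (k : ℕ) ⬝ᵥ Q *ᵥ w (k : ℕ))
      + (1/2) * (Θ ⬝ᵥ (Fmat N A B C * Qinv N Q * (Fmat N A B C)ᵀ) *ᵥ Θ) := by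
    have hQQ : Θ ⬝ᵥ (Fmat N A B C * Qinv N Q * (Fmat N A B C)ᵀ) *ᵥ Θ
        = ∑ k : Fin N, blk b k ⬝ᵥ Q⁻¹ *ᵥ blk b k := by
      rw [my_sandwich, ← hb, dot_split]
      exact Finset.sum_congr rfl fun k _ => by rw [Qinv_mulVec]
    rw [dot_split, hQQ, Finset.mul_sum, Finset.mul_sum, ← Finset.sum_add_distrib]
    exact Finset.sum_le_sum fun k _ => my_fenchel hQ (blk b k) (w (k : ℕ))
  have F3 : Θ ⬝ᵥ (r - ηst) ≤ (1/2) * (∑ k : Fin N,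
        (y ((k : ℕ) + 1) - C *ᵥ traj A B x0 w ((k : ℕ) + 1) - ηt k) ⬝ᵥ
          R *ᵥ (y ((k : ℕ) + 1) - C *ᵥ traj A B x0 w ((k : ℕ) + 1) - ηt k))
      + (1/2) * (Θ ⬝ᵥ Rinv N R *ᵥ Θ) := by
    have hRR : Θ ⬝ᵥ Rinv N R *ᵥ Θ = ∑ k : Fin N, blk Θ k ⬝ᵥ R⁻¹ *ᵥ blk Θ k := by
      rw [dot_split]
      exact Finset.sum_congr rfl fun k _ => by rw [Rinv_mulVec]
    rw [dot_split, hRR, Finset.mul_sum, Finset.mul_sum, ← Finset.sum_add_distrib]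
    apply Finset.sum_le_sum
    intro k _
    have hblk : blk (r - ηst) k
        = y ((k : ℕ) + 1) - C *ᵥ traj A B x0 w ((k : ℕ) + 1) - ηt k := by
      funext i
      simp [blk, hr, hηst]
    rw [hblk]
    exact my_fenchel hR (blk Θ k) _
  have hrY : r = Yvec N A C xbar y - Omat N A C *ᵥ δ - Fmat N A B C *ᵥ wst := by
    funext p
    have := resid_formula A B C xbar y x0 w p
    simpa [hr, hδ, hwst] using this
  have hlin : a ⬝ᵥ δ + b ⬝ᵥ wst + Θ ⬝ᵥ (r - ηst)
      = Θ ⬝ᵥ Yvec N A C xbar y - Θ ⬝ᵥ ηst := by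
    have h1 : a ⬝ᵥ δ = Θ ⬝ᵥ (Omat N A C *ᵥ δ) := by
      rw [Matrix.dotProduct_mulVec, ha, Matrix.mulVec_transpose]
    have h2 : b ⬝ᵥ wst = Θ ⬝ᵥ (Fmat N A B C *ᵥ wst) := by
      rw [Matrix.dotProduct_mulVec, hb, Matrix.mulVec_transpose]
    have h3 : Θ ⬝ᵥ (r - ηst) = Θ ⬝ᵥ r - Θ ⬝ᵥ ηst := by simp [dotProduct_sub]
    have h4 : Θ ⬝ᵥ r = Θ ⬝ᵥ Yvec N A C xbar y - Θ ⬝ᵥ (Omat N A C *ᵥ δ)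
        - Θ ⬝ᵥ (Fmat N A B C *ᵥ wst) := by
      rw [hrY]; simp [dotProduct_sub]
    rw [h3, h4, h1, h2]
    ring
  have hM : Θ ⬝ᵥ Mmat N A B C P Q R *ᵥ Θ
      = Θ ⬝ᵥ (Fmat N A B C * Qinv N Q * (Fmat N A B C)ᵀ) *ᵥ Θ
        + Θ ⬝ᵥ Rinv N R *ᵥ Θ
        + Θ ⬝ᵥ (Omat N A C * P⁻¹ * (Omat N A C)ᵀ) *ᵥ Θ := by
    unfold Mmat
    rw [Matrix.add_mulVec, Matrix.add_mulVec, dotProduct_add, dotProduct_add]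
  have hsum : ∑ k ∈ Finset.range N, w k ⬝ᵥ Q *ᵥ w k
      = ∑ k : Fin N, w (k : ℕ) ⬝ᵥ Q *ᵥ w (k : ℕ) :=
    (Fin.sum_univ_eq_sum_range (fun k => w k ⬝ᵥ Q *ᵥ w k) N).symm
  unfold epsCost
  rw [hsum]
  linarith [F1, F2, F3, hlin, hM]

lemma small_aux1 (gq epsq Mqq : ℝ) (hM : 0 ≤ Mqq)
    (key : ∀ t : ℝ, 0 ≤ t → t * gq - (1/2) * t^2 * Mqq ≤ t * epsq) : gq ≤ epsq := by
  by_contra hcon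
  push_neg at hcon
  have hdpos : 0 < gq - epsq := by linarith
  set d := gq - epsq with hd
  set t := d / (Mqq + 1) with ht
  have hMpos : (0:ℝ) < Mqq + 1 := by linarith
  have htpos : 0 < t := div_pos hdpos hMpos
  have hk := key t (le_of_lt htpos)
  have htM : t * (Mqq + 1) = d := div_mul_cancel₀ d (ne_of_gt hMpos)
  have e1 : t * gq - t * epsq = t * t * (Mqq + 1) := by
    have : t * gq - t * epsq = t * d := by rw [hd]; ring
    rw [this, ← htM]; ring
  have e2 : t * t * (Mqq + 1) ≤ (1/2) * t^2 * Mqq := by linarith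
  nlinarith [mul_pos htpos htpos, e2]

lemma small_aux (gq epsq Mqq : ℝ) (hM : 0 ≤ Mqq)
    (key : ∀ t : ℝ, t * gq - (1/2) * t^2 * Mqq ≤ |t| * epsq) : |gq| ≤ epsq := by
  rw [abs_le]
  constructor
  · have h := small_aux1 (-gq) epsq Mqq hM (fun t htt => by
      have hk := key (-t)
      rw [abs_neg, abs_of_nonneg htt] at hk
      nlinarith [hk])
    linarith
  · exact small_aux1 gq epsq Mqq hM (fun t htt => by
      have hk := key t
      rwa [abs_of_nonneg htt] at hk)

lemma compl_aux (S c : ℝ) (hS : 0 ≤ S)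
    (key : ∀ t : ℝ, -1 < t → t * c - (1/2) * t^2 * S ≤ 0) : c = 0 := by
  by_contra hc
  set X := S + c^2 + 1 with hX
  have hXpos : 0 < X := by nlinarith [sq_nonneg c]
  set t := c / X with ht
  have htX : t * X = c := div_mul_cancel₀ c (ne_of_gt hXpos)
  have habs : |t| < 1 := by
    rw [ht, abs_div, abs_of_pos hXpos, div_lt_one hXpos]
    nlinarith [sq_nonneg (|c| - 1), sq_abs c, abs_nonneg c, hS]
  have hk := key t (by linarith [neg_abs_le t, habs])
  have e1 : t * c = t * t * X := by rw [← htX]; ring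
  have e2 : 0 < X - (1/2) * S := by nlinarith [sq_nonneg c]
  have e3 : t * t * (X - (1/2) * S) ≤ 0 := by nlinarith [hk]
  have e4 : t * t = 0 := by nlinarith [mul_self_nonneg t, e2, e3]
  have e5 : t = 0 := by nlinarith [e4]
  apply hc
  rw [← htX, e5, zero_mul]

end AuxLemmas3
set_option maxHeartbeats 2000000 in
/-- **Theorem 1: optimal smoothing with ε-insensitive loss via the dual quadratic program.**
If `(Θ̂, ζ̂)` maximizes the dual objective `−½ΘᵀMΘ − ε̄ᵀζ + ΘᵀY` subject to `ζ ≥ Θ`, `ζ ≥ −Θ`,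
and `λ, x̂, ŵ, η` are constructed from `Θ̂` by the stated recursions, then `|η_k| ≤ ε`
componentwise and `(x̂_0, ŵ, η)` minimizes the ε-insensitive cost `J` over all feasible tuples. -/
theorem eps_insensitive_smoothing_optimal
    (n l m N : ℕ) (hN : 1 ≤ N)
    (A : Matrix (Fin n) (Fin n) ℝ) (B : Matrix (Fin n) (Fin l) ℝ)
    (C : Matrix (Fin m) (Fin n) ℝ)
    (P : Matrix (Fin n) (Fin n) ℝ) (Q : Matrix (Fin l) (Fin l) ℝ)
    (R : Matrix (Fin m) (Fin m) ℝ)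
    (hP : P.PosDef) (hQ : Q.PosDef) (hR : R.PosDef)
    (xbar : Fin n → ℝ) (y : ℕ → Fin m → ℝ)
    (ε : Fin m → ℝ) (hε : ∀ i, 0 < ε i)
    (Θhat ζhat : Fin N × Fin m → ℝ)
    (hfeas₁ : ∀ q, Θhat q ≤ ζhat q) (hfeas₂ : ∀ q, -Θhat q ≤ ζhat q)
    (hmax : ∀ Θ ζ : Fin N × Fin m → ℝ, (∀ q, Θ q ≤ ζ q) → (∀ q, -Θ q ≤ ζ q) →
      -(1 / 2) * (Θ ⬝ᵥ Mmat N A B C P Q R *ᵥ Θ) - (fun q => ε q.2) ⬝ᵥ ζ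
          + Θ ⬝ᵥ Yvec N A C xbar y
        ≤ -(1 / 2) * (Θhat ⬝ᵥ Mmat N A B C P Q R *ᵥ Θhat) - (fun q => ε q.2) ⬝ᵥ ζhat
          + Θhat ⬝ᵥ Yvec N A C xbar y)
    (lam : ℕ → Fin n → ℝ)
    (hlamN : lam N = 0)
    (hlam : ∀ k : Fin N,
      lam (k : ℕ) = Aᵀ *ᵥ lam ((k : ℕ) + 1) + Cᵀ *ᵥ (fun r => Θhat (k, r)))
    (xhat : ℕ → Fin n → ℝ)
    (hxhat0 : xhat 0 = xbar + P⁻¹ *ᵥ (Aᵀ *ᵥ lam 0))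
    (hxhat : ∀ k < N, xhat (k + 1) = A *ᵥ xhat k + B *ᵥ (Q⁻¹ *ᵥ (Bᵀ *ᵥ lam k)))
    (what : ℕ → Fin l → ℝ)
    (hwhat : ∀ k < N, what k = Q⁻¹ *ᵥ (Bᵀ *ᵥ lam k))
    (η : Fin N → Fin m → ℝ)
    (hη : ∀ k : Fin N,
      η k = y ((k : ℕ) + 1) - C *ᵥ xhat ((k : ℕ) + 1) - R⁻¹ *ᵥ (fun r => Θhat (k, r))) :
    (∀ (k : Fin N) (i : Fin m), |η k i| ≤ ε i) ∧
      ∀ (xt0 : Fin n → ℝ) (wt : ℕ → Fin l → ℝ) (ηt : Fin N → Fin m → ℝ),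
        (∀ (k : Fin N) (i : Fin m), |ηt k i| ≤ ε i) →
        epsCost N A B C P Q R xbar y (xhat 0) what η
          ≤ epsCost N A B C P Q R xbar y xt0 wt ηt := by
  classical
  have hMsym := M_symm (N := N) A B C hP hQ hR
  have hMpsd := M_quad_nonneg (N := N) A B C hP hQ hR
  have hlamF := lam_formula A C Θhat lam hlamN (fun k => hlam k)
  have hlam0A : Aᵀ *ᵥ lam 0 = (Omat N A C)ᵀ *ᵥ Θhat := by
    rw [hlamF N 0 (by omega), my_mulVec_sum, Ot_mulVec]
    apply Finset.sum_congr rfl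
    intro k _
    rw [if_pos (Nat.zero_le _), Matrix.mulVec_mulVec, ← pow_succ']
    simp
  have hlamB : ∀ j : Fin N, Bᵀ *ᵥ lam (j : ℕ) = blk ((Fmat N A B C)ᵀ *ᵥ Θhat) j := by
    intro j
    rw [hlamF (N - (j : ℕ)) (j : ℕ) (by omega), my_mulVec_sum, Ft_mulVec]
    apply Finset.sum_congr rfl
    intro k _
    by_cases hk : (j : ℕ) ≤ (k : ℕ)
    · rw [if_pos hk, if_pos hk]
    · rw [if_neg hk, if_neg hk, Matrix.mulVec_zero]
  have htraj : ∀ k, k ≤ N → traj A B (xhat 0) what k = xhat k := by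
    intro k
    induction k with
    | zero => intro _; rfl
    | succ k ih =>
        intro hk
        have hkN : k < N := by omega
        show A *ᵥ traj A B (xhat 0) what k + B *ᵥ what k = _
        rw [ih (by omega), hwhat k hkN, hxhat k hkN]
  have hδhat : xhat 0 - xbar = P⁻¹ *ᵥ ((Omat N A C)ᵀ *ᵥ Θhat) := by
    rw [hxhat0, hlam0A, add_sub_cancel_left]
  have hwst : (fun q : Fin N × Fin l => what (q.1 : ℕ) q.2)
      = Qinv N Q *ᵥ ((Fmat N A B C)ᵀ *ᵥ Θhat) := by
    funext q
    have h1 := hwhat (q.1 : ℕ) q.1.2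
    have h2 := hlamB q.1
    have h3 := Qinv_mulVec (N := N) Q ((Fmat N A B C)ᵀ *ᵥ Θhat) q.1
    calc what (q.1 : ℕ) q.2 = (Q⁻¹ *ᵥ (Bᵀ *ᵥ lam (q.1 : ℕ))) q.2 := by rw [h1]
      _ = (Q⁻¹ *ᵥ blk ((Fmat N A B C)ᵀ *ᵥ Θhat) q.1) q.2 := by rw [h2]
      _ = blk (Qinv N Q *ᵥ ((Fmat N A B C)ᵀ *ᵥ Θhat)) q.1 q.2 := by rw [h3]
      _ = (Qinv N Q *ᵥ ((Fmat N A B C)ᵀ *ᵥ Θhat)) q := by simp [blk]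
  have hMmul : Mmat N A B C P Q R *ᵥ Θhat
      = Fmat N A B C *ᵥ (Qinv N Q *ᵥ ((Fmat N A B C)ᵀ *ᵥ Θhat))
        + Rinv N R *ᵥ Θhat
        + Omat N A C *ᵥ (P⁻¹ *ᵥ ((Omat N A C)ᵀ *ᵥ Θhat)) := by
    unfold Mmat
    simp only [Matrix.add_mulVec, ← Matrix.mulVec_mulVec]
  have hηst : (fun p : Fin N × Fin m => η p.1 p.2)
      = Yvec N A C xbar y - Mmat N A B C P Q R *ᵥ Θhat := by
    funext p
    have h3 := resid_formula A B C xbar y (xhat 0) what p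
    rw [htraj ((p.1 : ℕ) + 1) (by have := p.1.2; omega), hδhat, hwst] at h3
    have hRp : (Rinv N R *ᵥ Θhat) p = (R⁻¹ *ᵥ (fun r => Θhat (p.1, r))) p.2 := by
      have h4 := congrFun (Rinv_mulVec (N := N) R Θhat p.1) p.2
      exact h4
    have h5 := congrFun (hη p.1) p.2
    simp only [Pi.sub_apply] at h5 ⊢
    rw [h5, hMmul]
    simp only [Pi.add_apply]
    rw [hRp]
    linarith [h3]
  -- part 1 key inequality
  have key1 : ∀ p : Fin N × Fin m,
      |(Yvec N A C xbar y - Mmat N A B C P Q R *ᵥ Θhat) p| ≤ ε p.2 := by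
    intro p
    have hMpp : 0 ≤ Mmat N A B C P Q R p p := by
      have h := hMpsd (Pi.single p 1)
      simpa [Matrix.mulVec_single] using h
    apply small_aux _ _ (Mmat N A B C P Q R p p) hMpp
    intro t
    have hf1 : ∀ q, (Θhat + t • (Pi.single p 1 : Fin N × Fin m → ℝ)) q ≤ (ζhat + |t| • (Pi.single p 1 : Fin N × Fin m → ℝ)) q := by
      intro q
      simp only [Pi.add_apply, Pi.smul_apply, smul_eq_mul, Pi.single_apply]
      by_cases hq : q = p
      · simp only [hq, eq_self_iff_true, if_true, mul_one]
        linarith [hfeas₁ q, le_abs_self t, hfeas₁ p]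
      · simp only [if_neg hq, mul_zero]
        linarith [hfeas₁ q]
    have hf2 : ∀ q, -(Θhat + t • (Pi.single p 1 : Fin N × Fin m → ℝ)) q ≤ (ζhat + |t| • (Pi.single p 1 : Fin N × Fin m → ℝ)) q := by
      intro q
      simp only [Pi.add_apply, Pi.smul_apply, smul_eq_mul, Pi.single_apply]
      by_cases hq : q = p
      · simp only [hq, eq_self_iff_true, if_true, mul_one]
        linarith [hfeas₂ p, neg_abs_le t]
      · simp only [if_neg hq, mul_zero]
        linarith [hfeas₂ q]
    have hmx := hmax (Θhat + t • (Pi.single p 1 : Fin N × Fin m → ℝ)) (ζhat + |t| • (Pi.single p 1 : Fin N × Fin m → ℝ)) hf1 hf2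
    have hme : Mmat N A B C P Q R *ᵥ (Pi.single p 1 : Fin N × Fin m → ℝ)
        = fun i => Mmat N A B C P Q R i p := by
      funext i
      simp [Matrix.mulVec_single]
    have h_e_dot : (Pi.single p 1 : Fin N × Fin m → ℝ) ⬝ᵥ (Mmat N A B C P Q R *ᵥ Θhat)
        = (Mmat N A B C P Q R *ᵥ Θhat) p := by simp
    have hswap : Θhat ⬝ᵥ Mmat N A B C P Q R *ᵥ (Pi.single p 1 : Fin N × Fin m → ℝ)
        = (Mmat N A B C P Q R *ᵥ Θhat) p := by
      rw [my_dot_swap' _ hMsym, h_e_dot]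
    have h_ee : (Pi.single p 1 : Fin N × Fin m → ℝ) ⬝ᵥ
        Mmat N A B C P Q R *ᵥ (Pi.single p 1 : Fin N × Fin m → ℝ)
        = Mmat N A B C P Q R p p := by
      rw [hme]; simp
    have hq1 : (Θhat + t • (Pi.single p 1 : Fin N × Fin m → ℝ)) ⬝ᵥ Mmat N A B C P Q R *ᵥ (Θhat + t • (Pi.single p 1 : Fin N × Fin m → ℝ))
        = Θhat ⬝ᵥ Mmat N A B C P Q R *ᵥ Θhat
          + 2 * t * ((Mmat N A B C P Q R *ᵥ Θhat) p)
          + t^2 * Mmat N A B C P Q R p p := by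
      simp only [Matrix.mulVec_add, Matrix.mulVec_smul, add_dotProduct,
        dotProduct_add, smul_dotProduct, dotProduct_smul, smul_eq_mul]
      rw [hswap, h_e_dot, h_ee]
      ring
    have hq2 : (fun q : Fin N × Fin m => ε q.2) ⬝ᵥ (ζhat + |t| • (Pi.single p 1 : Fin N × Fin m → ℝ))
        = (fun q : Fin N × Fin m => ε q.2) ⬝ᵥ ζhat + |t| * ε p.2 := by
      rw [dotProduct_add]
      congr 1
      simp [dotProduct_smul]
    have hq3 : (Θhat + t • (Pi.single p 1 : Fin N × Fin m → ℝ)) ⬝ᵥ Yvec N A C xbar y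
        = Θhat ⬝ᵥ Yvec N A C xbar y + t * Yvec N A C xbar y p := by
      rw [add_dotProduct]
      congr 1
      simp [smul_dotProduct]
    rw [hq1, hq2, hq3] at hmx
    have hgp : t * (Yvec N A C xbar y - Mmat N A B C P Q R *ᵥ Θhat) p
        = t * Yvec N A C xbar y p - t * (Mmat N A B C P Q R *ᵥ Θhat) p := by
      simp only [Pi.sub_apply]; ring
    rw [hgp]
    linarith [hmx]
  -- complementarity
  have key2 : Θhat ⬝ᵥ Yvec N A C xbar y - (fun q : Fin N × Fin m => ε q.2) ⬝ᵥ ζhat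
      - Θhat ⬝ᵥ Mmat N A B C P Q R *ᵥ Θhat = 0 := by
    apply compl_aux (Θhat ⬝ᵥ Mmat N A B C P Q R *ᵥ Θhat) _ (hMpsd Θhat)
    intro t htgt
    have h1t : (0:ℝ) ≤ 1 + t := by linarith
    have hf1 : ∀ q, (Θhat + t • Θhat) q ≤ (ζhat + t • ζhat) q := by
      intro q
      simp only [Pi.add_apply, Pi.smul_apply, smul_eq_mul]
      nlinarith [mul_le_mul_of_nonneg_left (hfeas₁ q) h1t]
    have hf2 : ∀ q, -(Θhat + t • Θhat) q ≤ (ζhat + t • ζhat) q := by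
      intro q
      simp only [Pi.add_apply, Pi.smul_apply, smul_eq_mul]
      nlinarith [mul_le_mul_of_nonneg_left (hfeas₂ q) h1t]
    have hmx := hmax (Θhat + t • Θhat) (ζhat + t • ζhat) hf1 hf2
    have hq1 : (Θhat + t • Θhat) ⬝ᵥ Mmat N A B C P Q R *ᵥ (Θhat + t • Θhat)
        = Θhat ⬝ᵥ Mmat N A B C P Q R *ᵥ Θhat + 2 * t * (Θhat ⬝ᵥ Mmat N A B C P Q R *ᵥ Θhat)
          + t^2 * (Θhat ⬝ᵥ Mmat N A B C P Q R *ᵥ Θhat) := by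
      simp only [Matrix.mulVec_add, Matrix.mulVec_smul, add_dotProduct,
        dotProduct_add, smul_dotProduct, dotProduct_smul, smul_eq_mul]
      ring
    have hq2 : (fun q : Fin N × Fin m => ε q.2) ⬝ᵥ (ζhat + t • ζhat)
        = (fun q : Fin N × Fin m => ε q.2) ⬝ᵥ ζhat
          + t * ((fun q : Fin N × Fin m => ε q.2) ⬝ᵥ ζhat) := by
      rw [dotProduct_add]
      congr 1
      simp [dotProduct_smul]
    have hq3 : (Θhat + t • Θhat) ⬝ᵥ Yvec N A C xbar y
        = Θhat ⬝ᵥ Yvec N A C xbar y + t * (Θhat ⬝ᵥ Yvec N A C xbar y) := by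
      rw [add_dotProduct]
      congr 1
      simp [smul_dotProduct]
    rw [hq1, hq2, hq3] at hmx
    nlinarith [hmx]
  -- value of the cost at the constructed point
  have hT1 : (xhat 0 - xbar) ⬝ᵥ P *ᵥ (xhat 0 - xbar)
      = Θhat ⬝ᵥ (Omat N A C * P⁻¹ * (Omat N A C)ᵀ) *ᵥ Θhat := by
    rw [hδhat, my_quad_inv hP, my_sandwich]
  have hT2 : ∑ k ∈ Finset.range N, what k ⬝ᵥ Q *ᵥ what k
      = Θhat ⬝ᵥ (Fmat N A B C * Qinv N Q * (Fmat N A B C)ᵀ) *ᵥ Θhat := by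
    rw [← Fin.sum_univ_eq_sum_range (fun k => what k ⬝ᵥ Q *ᵥ what k) N, my_sandwich, dot_split]
    apply Finset.sum_congr rfl
    intro k _
    rw [Qinv_mulVec]
    have hwk : what (k : ℕ) = Q⁻¹ *ᵥ blk ((Fmat N A B C)ᵀ *ᵥ Θhat) k := by
      rw [hwhat (k : ℕ) k.2, hlamB k]
    rw [hwk, my_quad_inv hQ]
  have hT3 : ∑ k : Fin N,
        (y ((k : ℕ) + 1) - C *ᵥ traj A B (xhat 0) what ((k : ℕ) + 1) - η k) ⬝ᵥ
          R *ᵥ (y ((k : ℕ) + 1) - C *ᵥ traj A B (xhat 0) what ((k : ℕ) + 1) - η k)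
      = Θhat ⬝ᵥ Rinv N R *ᵥ Θhat := by
    rw [dot_split]
    apply Finset.sum_congr rfl
    intro k _
    have hvk : y ((k : ℕ) + 1) - C *ᵥ traj A B (xhat 0) what ((k : ℕ) + 1) - η k
        = R⁻¹ *ᵥ blk Θhat k := by
      rw [htraj ((k : ℕ) + 1) (by have := k.2; omega), hη k]
      funext i
      change _ = (R⁻¹ *ᵥ fun r => Θhat (k, r)) i
      simp only [Pi.sub_apply]
      ring
    rw [hvk, Rinv_mulVec, my_quad_inv hR]
  have hMsplit : Θhat ⬝ᵥ Mmat N A B C P Q R *ᵥ Θhat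
      = Θhat ⬝ᵥ (Fmat N A B C * Qinv N Q * (Fmat N A B C)ᵀ) *ᵥ Θhat
        + Θhat ⬝ᵥ Rinv N R *ᵥ Θhat
        + Θhat ⬝ᵥ (Omat N A C * P⁻¹ * (Omat N A C)ᵀ) *ᵥ Θhat := by
    unfold Mmat
    rw [Matrix.add_mulVec, Matrix.add_mulVec, dotProduct_add, dotProduct_add]
  have hJhat : epsCost N A B C P Q R xbar y (xhat 0) what η
      = (1/2) * (Θhat ⬝ᵥ Mmat N A B C P Q R *ᵥ Θhat) := by
    unfold epsCost
    rw [hT1, hT2, hT3, hMsplit]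
    ring
  constructor
  · intro k i
    have h := key1 (k, i)
    have he : η k i = (Yvec N A C xbar y - Mmat N A B C P Q R *ᵥ Θhat) (k, i) :=
      congrFun hηst (k, i)
    rw [he]
    exact h
  · intro xt0 wt ηt hbt
    have W := weak_duality A B C hP hQ hR xbar y Θhat xt0 wt ηt
    have hb2 : Θhat ⬝ᵥ (fun q : Fin N × Fin m => ηt q.1 q.2)
        ≤ (fun q : Fin N × Fin m => ε q.2) ⬝ᵥ ζhat := by
      simp only [dotProduct]
      apply Finset.sum_le_sum
      intro q _
      calc Θhat q * ηt q.1 q.2 ≤ |Θhat q * ηt q.1 q.2| := le_abs_self _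
        _ = |Θhat q| * |ηt q.1 q.2| := abs_mul _ _
        _ ≤ |Θhat q| * ε q.2 := mul_le_mul_of_nonneg_left (hbt q.1 q.2) (abs_nonneg _)
        _ ≤ ζhat q * ε q.2 :=
            mul_le_mul_of_nonneg_right
              (abs_le.2 ⟨by linarith [hfeas₂ q], hfeas₁ q⟩) (le_of_lt (hε q.2))
        _ = ε q.2 * ζhat q := mul_comm _ _
    rw [hJhat]
    linarith [W, hb2, key2]
end

section
/- Let Θ = (θ_1,…,θ_N) ∈ ℝ^{Nm} with θ_k ∈ ℝ^m, let λ_0,…,λ_N ∈ ℝ^n be defined by λ_N = 0 and λ_{k−1} = Aᵀλ_k + Cᵀθ_k for k = 1,…,N, and let x̂_0,…,x̂_N be defined by x̂_0 = P⁻¹Aᵀλ_0 and x̂_{k+1} = A x̂_k + B Q⁻¹Bᵀλ_k for k = 0,…,N−1. Then the vertical stack of x̂_1,…,x̂_N ∈ ℝ^{Nn} equals ( S P⁻¹ Oᵀ + L Q_inv Fᵀ ) Θ, where S ∈ ℝ^{Nn×n} is the vertical stack of A, A², …, A^N, and L ∈ ℝ^{Nn×Nl} is the block lower-triangular matrix whose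 (k,i) block, for row index k = 1,…,N and column index i = 0,…,N−1, equals A^{k−1−i} B when i ≤ k−1 and 0 otherwise. -/
open Matrix

/-- The vertical stack `S` of `A, A², …, A^N`. -/
def Smat {n : ℕ} (N : ℕ) (A : Matrix (Fin n) (Fin n) ℝ) :
    Matrix (Fin N × Fin n) (Fin n) ℝ :=
  fun p c => (A ^ ((p.1 : ℕ) + 1)) p.2 c

/-- The block lower-triangular matrix `L` whose `(k, i)` block is `A^{k−1−i} B`. -/
def Lmat {n l : ℕ} (N : ℕ) (A : Matrix (Fin n) (Fin n) ℝ) (B : Matrix (Fin n) (Fin l) ℝ) :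
    Matrix (Fin N × Fin n) (Fin N × Fin l) ℝ :=
  fun p q => if (q.1 : ℕ) ≤ (p.1 : ℕ) then (A ^ ((p.1 : ℕ) - (q.1 : ℕ)) * B) p.2 q.2 else 0


private lemma mulVec_finsum {a b p : ℕ} (M : Matrix (Fin a) (Fin b) ℝ)
    (f : Fin p → Fin b → ℝ) : M *ᵥ (∑ j : Fin p, f j) = ∑ j : Fin p, M *ᵥ f j := by
  funext c
  simp only [Matrix.mulVec, dotProduct, Finset.sum_apply, Finset.mul_sum]
  exact Finset.sum_comm

/-- **The stacked state estimate is linear in `Θ`:**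
for the trajectory generated from the costate recursion (with `x̂_0 = P⁻¹Aᵀλ_0`),
`stack(x̂_1, …, x̂_N) = (S P⁻¹ Oᵀ + L Q_inv Fᵀ) Θ`. -/
theorem stacked_state_linear_in_theta
    (n l m N : ℕ) (hN : 1 ≤ N)
    (A : Matrix (Fin n) (Fin n) ℝ) (B : Matrix (Fin n) (Fin l) ℝ)
    (C : Matrix (Fin m) (Fin n) ℝ)
    (P : Matrix (Fin n) (Fin n) ℝ) (Q : Matrix (Fin l) (Fin l) ℝ)
    (hP : IsUnit P.det) (hQ : IsUnit Q.det)
    (Θ : Fin N × Fin m → ℝ)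
    (lam : ℕ → Fin n → ℝ)
    (hlamN : lam N = 0)
    (hlam : ∀ k : Fin N,
      lam (k : ℕ) = Aᵀ *ᵥ lam ((k : ℕ) + 1) + Cᵀ *ᵥ (fun r => Θ (k, r)))
    (xhat : ℕ → Fin n → ℝ)
    (hxhat0 : xhat 0 = P⁻¹ *ᵥ (Aᵀ *ᵥ lam 0))
    (hxhat : ∀ k < N, xhat (k + 1) = A *ᵥ xhat k + B *ᵥ (Q⁻¹ *ᵥ (Bᵀ *ᵥ lam k))) :
    (fun p : Fin N × Fin n => xhat ((p.1 : ℕ) + 1) p.2)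
      = (Smat N A * P⁻¹ * (Omat N A C)ᵀ + Lmat N A B * Qinv N Q * (Fmat N A B C)ᵀ) *ᵥ Θ := by
  classical
  -- closed form for the costate
  have lam_eq : ∀ d k, k + d = N →
      lam k = ∑ j : Fin N, if k ≤ (j : ℕ) then
        (Aᵀ ^ ((j : ℕ) - k) * Cᵀ) *ᵥ (fun r => Θ (j, r)) else 0 := by
    intro d
    induction d with
    | zero =>
      intro k hk
      have hkN : k = N := by omega
      subst hkN
      rw [hlamN]
      symm
      apply Finset.sum_eq_zero
      intro j _
      rw [if_neg (by omega)]
    | succ d ih =>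
      intro k hk
      have hkN : k < N := by omega
      have h1 := hlam ⟨k, hkN⟩
      simp only [Fin.val_mk] at h1  -- hopefully coe reduces
      rw [h1, ih (k + 1) (by omega), mulVec_finsum]
      have split : ∀ j : Fin N,
          (if k ≤ (j : ℕ) then (Aᵀ ^ ((j : ℕ) - k) * Cᵀ) *ᵥ (fun r => Θ (j, r)) else 0)
          = (Aᵀ *ᵥ
              (if k + 1 ≤ (j : ℕ) then (Aᵀ ^ ((j : ℕ) - (k + 1)) * Cᵀ) *ᵥ (fun r => Θ (j, r)) else 0))
            + (if j = (⟨k, hkN⟩ : Fin N) then Cᵀ *ᵥ (fun r => Θ (j, r)) else 0) := by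
        intro j
        by_cases hj : k + 1 ≤ (j : ℕ)
        · have hjk : ¬ j = (⟨k, hkN⟩ : Fin N) := by
            simp only [Fin.ext_iff]; omega
          rw [if_pos (by omega), if_pos hj, if_neg hjk, add_zero,
            Matrix.mulVec_mulVec]
          congr 1
          rw [show (j : ℕ) - k = ((j : ℕ) - (k + 1)) + 1 from by omega, pow_succ',
            Matrix.mul_assoc]
        · by_cases hjk : (j : ℕ) = k
          · have hj' : j = (⟨k, hkN⟩ : Fin N) := Fin.ext hjk
            rw [if_pos (by omega), if_neg hj, if_pos hj', Matrix.mulVec_zero, zero_add]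
            rw [hjk, Nat.sub_self, pow_zero, Matrix.one_mul]
          · have h2 : ¬ k ≤ (j : ℕ) := by omega
            have h3 : ¬ j = (⟨k, hkN⟩ : Fin N) := by
              simp only [Fin.ext_iff]; omega
            rw [if_neg h2, if_neg hj, if_neg h3, Matrix.mulVec_zero, zero_add]
      rw [Finset.sum_congr rfl (fun j _ => split j), Finset.sum_add_distrib,
        Finset.sum_ite_eq' Finset.univ (⟨k, hkN⟩ : Fin N)
          (fun j => Cᵀ *ᵥ (fun r => Θ (j, r)))]
      simp
  -- closed form for the state
  have xhat_eq : ∀ k, k ≤ N →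
      xhat k = A ^ k *ᵥ xhat 0 + ∑ i : Fin N, if (i : ℕ) < k then
        (A ^ (k - 1 - (i : ℕ)) * B * Q⁻¹ * Bᵀ) *ᵥ lam (i : ℕ) else 0 := by
    intro k
    induction k with
    | zero =>
      intro _
      have : (∑ i : Fin N, if (i : ℕ) < 0 then
          (A ^ (0 - 1 - (i : ℕ)) * B * Q⁻¹ * Bᵀ) *ᵥ lam (i : ℕ) else 0) = 0 :=
        Finset.sum_eq_zero (fun i _ => by rw [if_neg (by omega)])
      rw [this, pow_zero, Matrix.one_mulVec, add_zero]
    | succ k ih =>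
      intro hk
      rw [hxhat k (by omega), ih (by omega), Matrix.mulVec_add,
        Matrix.mulVec_mulVec, ← pow_succ', mulVec_finsum]
      have split : ∀ i : Fin N,
          (if (i : ℕ) < k + 1 then (A ^ (k + 1 - 1 - (i : ℕ)) * B * Q⁻¹ * Bᵀ) *ᵥ lam (i : ℕ) else 0)
          = (A *ᵥ
              (if (i : ℕ) < k then (A ^ (k - 1 - (i : ℕ)) * B * Q⁻¹ * Bᵀ) *ᵥ lam (i : ℕ) else 0))
            + (if (i : ℕ) = k ∧ k < N then (A ^ 0 * B * Q⁻¹ * Bᵀ) *ᵥ lam (i : ℕ) else 0) := by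
        intro i
        by_cases hi : (i : ℕ) < k
        · rw [if_pos (by omega), if_pos hi, if_neg (fun h => by omega), add_zero,
            Matrix.mulVec_mulVec]
          congr 1
          rw [show k + 1 - 1 - (i : ℕ) = (k - 1 - (i : ℕ)) + 1 from by omega, pow_succ',
            Matrix.mul_assoc, Matrix.mul_assoc, Matrix.mul_assoc, Matrix.mul_assoc,
            Matrix.mul_assoc]
        · by_cases hik : (i : ℕ) = k
          · rw [if_pos (by omega), if_neg hi, if_pos ⟨hik, by omega⟩,
              Matrix.mulVec_zero, zero_add,
              show k + 1 - 1 - (i : ℕ) = 0 from by omega, hik]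
          · rw [if_neg (by omega), if_neg hi, if_neg (fun h => by omega),
              Matrix.mulVec_zero, zero_add]
      rw [Finset.sum_congr rfl (fun i _ => split i), Finset.sum_add_distrib]
      by_cases hkN : k < N
      · have : (∑ i : Fin N, if (i : ℕ) = k ∧ k < N then
            (A ^ 0 * B * Q⁻¹ * Bᵀ) *ᵥ lam (i : ℕ) else 0)
            = (A ^ 0 * B * Q⁻¹ * Bᵀ) *ᵥ lam k := by
          rw [Finset.sum_eq_single (⟨k, hkN⟩ : Fin N)]
          · rw [if_pos ⟨rfl, hkN⟩]
          · intro i _ hi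
            rw [if_neg (by
              rintro ⟨h1, _⟩
              exact hi (Fin.ext h1))]
          · intro h; exact absurd (Finset.mem_univ _) h
        rw [this]
        simp only [pow_zero, Matrix.one_mul]
        rw [Matrix.mul_assoc, ← Matrix.mulVec_mulVec, ← Matrix.mulVec_mulVec]
        abel
      · omega
  -- expression for `lam` as a vector-sum, abbreviate
  set lamE : ℕ → Fin n → ℝ := fun i => ∑ j : Fin N, if i ≤ (j : ℕ) then
      (Aᵀ ^ ((j : ℕ) - i) * Cᵀ) *ᵥ (fun r => Θ (j, r)) else 0 with hlamE
  have lam_eq' : ∀ i ≤ N, lam i = lamE i := fun i hi => lam_eq (N - i) i (by omega)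
  funext p
  obtain ⟨k, c⟩ := p
  have hk1 : (k : ℕ) + 1 ≤ N := k.isLt
  show xhat ((k : ℕ) + 1) c = _
  rw [xhat_eq ((k : ℕ) + 1) hk1]
  rw [Matrix.add_mulVec]
  show (A ^ ((k : ℕ) + 1) *ᵥ xhat 0) c
      + (∑ i : Fin N, if (i : ℕ) < (k : ℕ) + 1 then
          (A ^ ((k : ℕ) + 1 - 1 - (i : ℕ)) * B * Q⁻¹ * Bᵀ) *ᵥ lam (i : ℕ) else 0) c
    = ((Smat N A * P⁻¹ * (Omat N A C)ᵀ) *ᵥ Θ) (k, c)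
      + ((Lmat N A B * Qinv N Q * (Fmat N A B C)ᵀ) *ᵥ Θ) (k, c)
  have Opart : (Omat N A C)ᵀ *ᵥ Θ = Aᵀ *ᵥ lam 0 := by
    rw [lam_eq' 0 (by omega), hlamE]
    rw [mulVec_finsum]
    funext c'
    rw [Finset.sum_apply]
    rw [Matrix.mulVec, dotProduct]  -- LHS entry
    rw [Fintype.sum_prod_type]
    refine Finset.sum_congr rfl (fun j _ => ?_)
    rw [if_pos (by omega), Matrix.mulVec_mulVec, ← Matrix.mul_assoc, ← pow_succ',
      Nat.sub_zero]
    refine Finset.sum_congr rfl (fun r _ => ?_)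
    congr 1
    rw [Matrix.transpose_apply]
    show Omat N A C (j, r) c' = (Aᵀ ^ ((j : ℕ) + 1) * Cᵀ) c' r
    show (C * A ^ ((j : ℕ) + 1)) r c' = (Aᵀ ^ ((j : ℕ) + 1) * Cᵀ) c' r
    rw [← Matrix.transpose_pow, ← Matrix.transpose_mul, Matrix.transpose_apply]
  have Fpart : ∀ i : Fin N, ∀ e : Fin l,
      ((Fmat N A B C)ᵀ *ᵥ Θ) (i, e) = (Bᵀ *ᵥ lamE (i : ℕ)) e := by
    intro i e
    rw [hlamE, mulVec_finsum]
    rw [Matrix.mulVec, dotProduct, Fintype.sum_prod_type, Finset.sum_apply]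
    refine Finset.sum_congr rfl (fun j _ => ?_)
    by_cases hij : (i : ℕ) ≤ (j : ℕ)
    · rw [if_pos hij]
      rw [Matrix.mulVec_mulVec]
      rw [Matrix.mulVec, dotProduct]
      refine Finset.sum_congr rfl (fun r _ => ?_)
      congr 1
      rw [Matrix.transpose_apply]
      show Fmat N A B C (j, r) (i, e) = (Bᵀ * (Aᵀ ^ ((j:ℕ) - (i:ℕ)) * Cᵀ)) e r
      show (if ((i : ℕ) : ℕ) ≤ ((j : ℕ) : ℕ) then (C * A ^ ((j:ℕ) - (i:ℕ)) * B) r e else 0)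
        = (Bᵀ * (Aᵀ ^ ((j:ℕ) - (i:ℕ)) * Cᵀ)) e r
      rw [if_pos hij]
      rw [← Matrix.transpose_pow, ← Matrix.transpose_mul, ← Matrix.transpose_mul,
        Matrix.transpose_apply]
    · rw [if_neg hij]
      simp only [Pi.zero_apply, mulVec_zero]
      apply Finset.sum_eq_zero
      intro r _
      rw [Matrix.transpose_apply]
      show Fmat N A B C (j, r) (i, e) * Θ (j, r) = 0
      show (if ((i : ℕ) : ℕ) ≤ ((j : ℕ) : ℕ) then (C * A ^ ((j:ℕ) - (i:ℕ)) * B) r e else 0)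
          * Θ (j, r) = 0
      rw [if_neg hij, zero_mul]
  have Qpart : ∀ i : Fin N, ∀ e : Fin l, ∀ w : Fin N × Fin l → ℝ,
      (Qinv N Q *ᵥ w) (i, e) = (Q⁻¹ *ᵥ (fun e' => w (i, e'))) e := by
    intro i e w
    rw [Matrix.mulVec, dotProduct, Fintype.sum_prod_type]
    rw [Matrix.mulVec, dotProduct]
    rw [Finset.sum_eq_single i]
    · refine Finset.sum_congr rfl (fun e' _ => ?_)
      simp [Qinv]
    · intro i' _ hi'
      apply Finset.sum_eq_zero
      intro e' _
      show (if i = i' then Q⁻¹ e e' else 0) * w (i', e') = 0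
      rw [if_neg (fun h => hi' h.symm), zero_mul]
    · intro h; exact absurd (Finset.mem_univ _) h
  have Lpart : ∀ u : Fin N × Fin l → ℝ,
      (Lmat N A B *ᵥ u) (k, c)
        = ∑ i : Fin N, if (i : ℕ) ≤ (k : ℕ) then
            ((A ^ ((k : ℕ) - (i : ℕ)) * B) *ᵥ (fun e => u (i, e))) c else 0 := by
    intro u
    rw [Matrix.mulVec, dotProduct, Fintype.sum_prod_type]
    refine Finset.sum_congr rfl (fun i _ => ?_)
    by_cases hik : (i : ℕ) ≤ (k : ℕ)
    · rw [if_pos hik, Matrix.mulVec, dotProduct]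
      refine Finset.sum_congr rfl (fun e _ => ?_)
      congr 1
      show Lmat N A B (k, c) (i, e) = _
      show (if ((i : ℕ) : ℕ) ≤ ((k : ℕ) : ℕ) then (A ^ ((k:ℕ) - (i:ℕ)) * B) c e else 0) = _
      rw [if_pos hik]
    · rw [if_neg hik]
      apply Finset.sum_eq_zero
      intro e _
      show (if ((i:ℕ) : ℕ) ≤ ((k:ℕ) : ℕ) then (A ^ ((k:ℕ) - (i:ℕ)) * B) c e else 0) * u (i, e) = 0
      rw [if_neg hik, zero_mul]
  -- first summand
  have h1 : (A ^ ((k : ℕ) + 1) *ᵥ xhat 0) c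
      = ((Smat N A * P⁻¹ * (Omat N A C)ᵀ) *ᵥ Θ) (k, c) := by
    rw [← Matrix.mulVec_mulVec, ← Matrix.mulVec_mulVec, Opart, ← hxhat0]
    rw [Matrix.mulVec, dotProduct]
    rw [Matrix.mulVec, dotProduct]
    refine Finset.sum_congr rfl (fun c' _ => ?_)
    rfl
  -- second summand
  have h2 : (∑ i : Fin N, if (i : ℕ) < (k : ℕ) + 1 then
        (A ^ ((k : ℕ) + 1 - 1 - (i : ℕ)) * B * Q⁻¹ * Bᵀ) *ᵥ lam (i : ℕ) else 0) c
      = ((Lmat N A B * Qinv N Q * (Fmat N A B C)ᵀ) *ᵥ Θ) (k, c) := by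
    rw [← Matrix.mulVec_mulVec, ← Matrix.mulVec_mulVec, Lpart]
    rw [Finset.sum_apply]
    refine Finset.sum_congr rfl (fun i _ => ?_)
    by_cases hik : (i : ℕ) ≤ (k : ℕ)
    · rw [if_pos (by omega), if_pos hik]
      rw [lam_eq' (i : ℕ) (by omega)]
      have expo : (k : ℕ) + 1 - 1 - (i : ℕ) = (k : ℕ) - (i : ℕ) := by omega
      rw [expo]
      have : (fun e => (Qinv N Q *ᵥ ((Fmat N A B C)ᵀ *ᵥ Θ)) (i, e))
          = Q⁻¹ *ᵥ (Bᵀ *ᵥ lamE (i : ℕ)) := by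
        funext e
        rw [Qpart]
        congr 1
        funext e'
        rw [Fpart]
      rw [this]
      rw [Matrix.mulVec_mulVec, Matrix.mulVec_mulVec]
    · rw [if_neg (by omega), if_neg hik]
      simp
  rw [h1, h2]
end

section
/- Let (Ω, 𝒜, μ) be a probability space, and let x_0 : Ω → ℝ^n, w_0,…,w_{N−1} : Ω → ℝ^l and v_1,…,v_N : Ω → ℝ^m be mutually independent square-integrable random vectors, each with zero mean, satisfying E[x_0 x_0ᵀ] = P⁻¹, E[w_k w_kᵀ] = Q⁻¹ for every k, and E[v_k v_kᵀ] = R⁻¹ for every k. Define y_k = C A^k x_0 + Σ_{i=0}^{k−1} C A^{k−1−i} B w_i + v_k for k = 1,…,N, and let y : Ω → ℝ^{Nm} be the vertical stack of y_1,…,y_N. Then E[y yᵀ] = M, i.e. the Nm×Nm matrix whose (k,j) block is E[y_k y_jᵀ] equals F Q_inv Fᵀ + R_inv + O P⁻¹ Oᵀ. -/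
open Matrix MeasureTheory ProbabilityTheory

/-- The family `(x_0, w_0, …, w_{N−1}, v_1, …, v_N)` of random vectors, indexed by
`Unit ⊕ Fin N ⊕ Fin N`. -/
def fam {Ω : Type*} {n l m N : ℕ} (x0 : Ω → Fin n → ℝ) (w : Fin N → Ω → Fin l → ℝ)
    (v : Fin N → Ω → Fin m → ℝ) :
    (i : Unit ⊕ Fin N ⊕ Fin N) →
      Ω → Sum.elim (fun _ : Unit => Fin n → ℝ)
        (Sum.elim (fun _ : Fin N => Fin l → ℝ) (fun _ : Fin N => Fin m → ℝ)) i
  | Sum.inl _ => x0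
  | Sum.inr (Sum.inl k) => w k
  | Sum.inr (Sum.inr k) => v k

/-- The measurable-space structures on the codomains of the family `fam`. -/
def famMS (n l m N : ℕ) :
    (i : Unit ⊕ Fin N ⊕ Fin N) →
      MeasurableSpace (Sum.elim (fun _ : Unit => Fin n → ℝ)
        (Sum.elim (fun _ : Fin N => Fin l → ℝ) (fun _ : Fin N => Fin m → ℝ)) i)
  | Sum.inl _ => (inferInstance : MeasurableSpace (Fin n → ℝ))
  | Sum.inr (Sum.inl _) => (inferInstance : MeasurableSpace (Fin l → ℝ))
  | Sum.inr (Sum.inr _) => (inferInstance : MeasurableSpace (Fin m → ℝ))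

/-! ### Auxiliary machinery -/

section Aux

variable {Ω : Type*} {n l m N : ℕ}

/-- The scalar atom random variables. -/
def atomF (x0 : Ω → Fin n → ℝ) (w : Fin N → Ω → Fin l → ℝ) (v : Fin N → Ω → Fin m → ℝ) :
    (Fin n ⊕ (Fin N × Fin l) ⊕ (Fin N × Fin m)) → Ω → ℝ
  | .inl j => fun ω => x0 ω j
  | .inr (.inl t) => fun ω => w t.1 ω t.2
  | .inr (.inr t) => fun ω => v t.1 ω t.2

/-- Coefficients of `y` in terms of the atoms. -/
def coeffF (N : ℕ) (A : Matrix (Fin n) (Fin n) ℝ) (B : Matrix (Fin n) (Fin l) ℝ)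
    (C : Matrix (Fin m) (Fin n) ℝ) (p : Fin N × Fin m) :
    (Fin n ⊕ (Fin N × Fin l) ⊕ (Fin N × Fin m)) → ℝ
  | .inl j => Omat N A C p j
  | .inr (.inl t) => Fmat N A B C p t
  | .inr (.inr t) => if t = p then 1 else 0

/-- The Gram matrix of the atoms. -/
noncomputable def gramF (N : ℕ) (P : Matrix (Fin n) (Fin n) ℝ) (Q : Matrix (Fin l) (Fin l) ℝ)
    (R : Matrix (Fin m) (Fin m) ℝ) :
    (Fin n ⊕ (Fin N × Fin l) ⊕ (Fin N × Fin m)) →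
    (Fin n ⊕ (Fin N × Fin l) ⊕ (Fin N × Fin m)) → ℝ
  | .inl j, .inl j' => P⁻¹ j j'
  | .inr (.inl t), .inr (.inl t') => if t.1 = t'.1 then Q⁻¹ t.2 t'.2 else 0
  | .inr (.inr t), .inr (.inr t') => if t.1 = t'.1 then R⁻¹ t.2 t'.2 else 0
  | _, _ => 0

lemma mul_integrable_of_memL2 [MeasurableSpace Ω] {μ : Measure Ω} {f g : Ω → ℝ}
    (hf : MemLp f 2 μ) (hg : MemLp g 2 μ) : Integrable (fun ω => f ω * g ω) μ := by
  rw [← memLp_one_iff_integrable]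
  exact MemLp.smul (r := 1) hg hf

/-- Algebraic identity: the quadratic form of the coefficients against the Gram matrix is `M`. -/
lemma coeff_gram_coeff (A : Matrix (Fin n) (Fin n) ℝ) (B : Matrix (Fin n) (Fin l) ℝ)
    (C : Matrix (Fin m) (Fin n) ℝ) (P : Matrix (Fin n) (Fin n) ℝ)
    (Q : Matrix (Fin l) (Fin l) ℝ) (R : Matrix (Fin m) (Fin m) ℝ)
    (p q : Fin N × Fin m) :
    ∑ t : Fin n ⊕ (Fin N × Fin l) ⊕ (Fin N × Fin m),
      ∑ t' : Fin n ⊕ (Fin N × Fin l) ⊕ (Fin N × Fin m),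
        coeffF N A B C p t * coeffF N A B C q t' * gramF N P Q R t t'
      = (Fmat N A B C * Qinv N Q * (Fmat N A B C)ᵀ + Rinv N R
          + Omat N A C * P⁻¹ * (Omat N A C)ᵀ) p q := by
  have h1 : ∑ j : Fin n, ∑ j' : Fin n,
      coeffF N A B C p (.inl j) * coeffF N A B C q (.inl j') * P⁻¹ j j'
      = (Omat N A C * P⁻¹ * (Omat N A C)ᵀ) p q := by
    simp only [coeffF, Matrix.mul_apply, Matrix.transpose_apply, Finset.sum_mul,
      Finset.mul_sum]
    rw [Finset.sum_comm]
    exact Finset.sum_congr rfl fun j _ => Finset.sum_congr rfl fun j' _ => by ring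
  have h2 : ∑ t : Fin N × Fin l, ∑ t' : Fin N × Fin l,
      coeffF N A B C p (.inr (.inl t)) * coeffF N A B C q (.inr (.inl t'))
        * (if t.1 = t'.1 then Q⁻¹ t.2 t'.2 else 0)
      = (Fmat N A B C * Qinv N Q * (Fmat N A B C)ᵀ) p q := by
    simp only [coeffF, Matrix.mul_apply, Matrix.transpose_apply, Finset.sum_mul,
      Finset.mul_sum, Qinv]
    rw [Finset.sum_comm]
    exact Finset.sum_congr rfl fun t _ => Finset.sum_congr rfl fun t' _ => by ring
  have h3 : ∑ t : Fin N × Fin m, ∑ t' : Fin N × Fin m,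
      coeffF N A B C p (.inr (.inr t)) * coeffF N A B C q (.inr (.inr t'))
        * (if t.1 = t'.1 then R⁻¹ t.2 t'.2 else 0)
      = Rinv N R p q := by
    simp only [coeffF]
    rw [Finset.sum_eq_single p]
    · rw [Finset.sum_eq_single q]
      · simp [Rinv]
      · intro t' _ ht'; simp [ht']
      · simp
    · intro t _ ht; simp [ht]
    · simp
  simp only [Fintype.sum_sum_type, gramF, mul_zero, Finset.sum_const_zero, add_zero,
    zero_add, Matrix.add_apply]
  rw [h1, h2, h3]
  ring

end Aux

/-- **`E[y yᵀ] = M`**: if `x_0`, the `w_k` and the `v_k` are mutually independent,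
square-integrable, zero-mean random vectors with second moments `P⁻¹`, `Q⁻¹`, `R⁻¹`, and
`y_k = C A^k x_0 + Σ_{i=0}^{k−1} C A^{k−1−i} B w_i + v_k`, then the second-moment matrix of the
stacked measurement vector is `M = F Q_inv Fᵀ + R_inv + O P⁻¹ Oᵀ`. -/
theorem measurement_covariance_eq_M
    (n l m N : ℕ) (hN : 1 ≤ N)
    (A : Matrix (Fin n) (Fin n) ℝ) (B : Matrix (Fin n) (Fin l) ℝ)
    (C : Matrix (Fin m) (Fin n) ℝ)
    (P : Matrix (Fin n) (Fin n) ℝ) (Q : Matrix (Fin l) (Fin l) ℝ)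
    (R : Matrix (Fin m) (Fin m) ℝ)
    (hP : IsUnit P.det) (hQ : IsUnit Q.det) (hR : IsUnit R.det)
    (Ω : Type*) [MeasurableSpace Ω] (μ : Measure Ω) [IsProbabilityMeasure μ]
    (x0 : Ω → Fin n → ℝ) (w : Fin N → Ω → Fin l → ℝ) (v : Fin N → Ω → Fin m → ℝ)
    (hx0meas : Measurable x0) (hwmeas : ∀ k, Measurable (w k)) (hvmeas : ∀ k, Measurable (v k))
    (hx0L2 : ∀ c, MemLp (fun ω => x0 ω c) 2 μ)
    (hwL2 : ∀ k c, MemLp (fun ω => w k ω c) 2 μ)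
    (hvL2 : ∀ k c, MemLp (fun ω => v k ω c) 2 μ)
    (hindep : iIndepFun (m := famMS n l m N) (fam x0 w v) μ)
    (hx0mean : ∀ c, ∫ ω, x0 ω c ∂μ = 0)
    (hwmean : ∀ k c, ∫ ω, w k ω c ∂μ = 0)
    (hvmean : ∀ k c, ∫ ω, v k ω c ∂μ = 0)
    (hx0cov : ∀ c c', ∫ ω, x0 ω c * x0 ω c' ∂μ = P⁻¹ c c')
    (hwcov : ∀ k c c', ∫ ω, w k ω c * w k ω c' ∂μ = Q⁻¹ c c')
    (hvcov : ∀ k c c', ∫ ω, v k ω c * v k ω c' ∂μ = R⁻¹ c c')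
    (y : Fin N → Ω → Fin m → ℝ)
    (hy : ∀ (k : Fin N) (ω : Ω),
      y k ω = (C * A ^ ((k : ℕ) + 1)) *ᵥ x0 ω
        + ∑ i ∈ Finset.univ.filter (fun i : Fin N => (i : ℕ) ≤ (k : ℕ)),
            (C * A ^ ((k : ℕ) - (i : ℕ)) * B) *ᵥ w i ω
        + v k ω) :
    ∀ p q : Fin N × Fin m,
      ∫ ω, y p.1 ω p.2 * y q.1 ω q.2 ∂μ
        = (Fmat N A B C * Qinv N Q * (Fmat N A B C)ᵀ + Rinv N R
            + Omat N A C * P⁻¹ * (Omat N A C)ᵀ) p q := by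
  intro p q
  set I := (Fin n ⊕ (Fin N × Fin l) ⊕ (Fin N × Fin m)) with hI
  -- atoms are in L2
  have hatomL2 : ∀ t : I, MemLp (atomF x0 w v t) 2 μ := by
    rintro (j | t | t)
    · exact hx0L2 j
    · exact hwL2 t.1 t.2
    · exact hvL2 t.1 t.2
  have hatomInt : ∀ t : I, Integrable (atomF x0 w v t) μ := fun t =>
    (hatomL2 t).integrable one_le_two
  have hprodInt : ∀ t t' : I, Integrable (fun ω => atomF x0 w v t ω * atomF x0 w v t' ω) μ :=
    fun t t' => mul_integrable_of_memL2 (hatomL2 t) (hatomL2 t')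
  -- atom means
  have hatomMean : ∀ t : I, ∫ ω, atomF x0 w v t ω ∂μ = 0 := by
    rintro (j | t | t)
    · exact hx0mean j
    · exact hwmean t.1 t.2
    · exact hvmean t.1 t.2
  -- fam index of an atom
  let φ : I → Unit ⊕ Fin N ⊕ Fin N := fun t =>
    match t with
    | .inl _ => .inl ()
    | .inr (.inl t) => .inr (.inl t.1)
    | .inr (.inr t) => .inr (.inr t.1)
  -- independence of atoms with distinct fam indices
  have hatomIndep : ∀ t t' : I, φ t ≠ φ t' →
      IndepFun (atomF x0 w v t) (atomF x0 w v t') μ := by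
    intro t t' hne
    have hbase := hindep.indepFun hne
    rcases t with j | t | t <;> rcases t' with j' | t' | t' <;>
      exact hbase.comp (measurable_pi_apply _) (measurable_pi_apply _)
  have hzeroIndep : ∀ t t' : I, φ t ≠ φ t' →
      ∫ ω, atomF x0 w v t ω * atomF x0 w v t' ω ∂μ = 0 := by
    intro t t' hne
    have h2 := (hatomIndep t t' hne).integral_fun_mul_eq_mul_integral (hatomInt t).aestronglyMeasurable (hatomInt t').aestronglyMeasurable
    rw [hatomMean, hatomMean, mul_zero] at h2
    exact h2
  -- the Gram identity
  have hgram : ∀ t t' : I,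
      ∫ ω, atomF x0 w v t ω * atomF x0 w v t' ω ∂μ = gramF N P Q R t t' := by
    rintro (j | t | t) (j' | t' | t')
    · exact hx0cov j j'
    · exact hzeroIndep _ _ (by simp [φ])
    · exact hzeroIndep _ _ (by simp [φ])
    · exact hzeroIndep _ _ (by simp [φ])
    · by_cases h : t.1 = t'.1
      · show _ = if t.1 = t'.1 then Q⁻¹ t.2 t'.2 else 0
        rw [if_pos h]
        obtain ⟨i, a⟩ := t; obtain ⟨i', a'⟩ := t'
        cases h
        exact hwcov i a a'
      · show _ = if t.1 = t'.1 then Q⁻¹ t.2 t'.2 else 0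
        rw [if_neg h]
        exact hzeroIndep _ _ (by simp [φ, h])
    · exact hzeroIndep _ _ (by simp [φ])
    · exact hzeroIndep _ _ (by simp [φ])
    · exact hzeroIndep _ _ (by simp [φ])
    · by_cases h : t.1 = t'.1
      · show _ = if t.1 = t'.1 then R⁻¹ t.2 t'.2 else 0
        rw [if_pos h]
        obtain ⟨i, a⟩ := t; obtain ⟨i', a'⟩ := t'
        cases h
        exact hvcov i a a'
      · show _ = if t.1 = t'.1 then R⁻¹ t.2 t'.2 else 0
        rw [if_neg h]
        exact hzeroIndep _ _ (by simp [φ, h])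
  -- decomposition of y
  have hydecomp : ∀ (k : Fin N) (c : Fin m) (ω : Ω),
      y k ω c = ∑ t : I, coeffF N A B C (k, c) t * atomF x0 w v t ω := by
    intro k c ω
    rw [hy k ω]
    rw [Fintype.sum_sum_type]
    simp only [Fintype.sum_sum_type, Fintype.sum_prod_type]
    have e1 : ∑ j : Fin n, coeffF N A B C (k, c) (.inl j) * atomF x0 w v (.inl j) ω
        = ((C * A ^ ((k : ℕ) + 1)) *ᵥ x0 ω) c := by
      simp [coeffF, atomF, Omat, Matrix.mulVec, dotProduct]
    have e2 : ∑ i : Fin N, ∑ j : Fin l,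
        coeffF N A B C (k, c) (.inr (.inl (i, j))) * atomF x0 w v (.inr (.inl (i, j))) ω
        = (∑ i ∈ Finset.univ.filter (fun i : Fin N => (i : ℕ) ≤ (k : ℕ)),
            (C * A ^ ((k : ℕ) - (i : ℕ)) * B) *ᵥ w i ω) c := by
      simp only [coeffF, atomF, Fmat, Finset.sum_apply, Matrix.mulVec, dotProduct]
      rw [Finset.sum_filter]
      refine Finset.sum_congr rfl fun i _ => ?_
      by_cases h : (i : ℕ) ≤ (k : ℕ) <;> simp [h]
    have e3 : ∑ i : Fin N, ∑ j : Fin m,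
        coeffF N A B C (k, c) (.inr (.inr (i, j))) * atomF x0 w v (.inr (.inr (i, j))) ω
        = v k ω c := by
      simp only [coeffF, atomF]
      rw [Finset.sum_eq_single k]
      · rw [Finset.sum_eq_single c]
        · simp
        · intro j _ hj; simp [Prod.ext_iff, hj]
        · simp
      · intro i _ hi
        apply Finset.sum_eq_zero
        intro j _
        simp [Prod.ext_iff, hi]
      · simp
    rw [e1, e2, e3]
    simp [Pi.add_apply, add_assoc]
  -- main computation
  calc ∫ ω, y p.1 ω p.2 * y q.1 ω q.2 ∂μ
      = ∫ ω, ∑ t : I, ∑ t' : I,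
          coeffF N A B C p t * coeffF N A B C q t'
            * (atomF x0 w v t ω * atomF x0 w v t' ω) ∂μ := by
        refine integral_congr_ae (Filter.Eventually.of_forall fun ω => ?_)
        show y p.1 ω p.2 * y q.1 ω q.2 = _
        rw [hydecomp p.1 p.2 ω, hydecomp q.1 q.2 ω, Finset.sum_mul_sum]
        exact Finset.sum_congr rfl fun t _ => Finset.sum_congr rfl fun t' _ => by ring
    _ = ∑ t : I, ∑ t' : I,
          coeffF N A B C p t * coeffF N A B C q t' * gramF N P Q R t t' := by
        rw [integral_finset_sum]
        · refine Finset.sum_congr rfl fun t _ => ?_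
          rw [integral_finset_sum]
          · refine Finset.sum_congr rfl fun t' _ => ?_
            rw [integral_const_mul, hgram]
          · intro t' _
            exact ((hprodInt t t').const_mul _)
        · intro t _
          apply integrable_finset_sum
          intro t' _
          exact ((hprodInt t t').const_mul _)
    _ = _ := coeff_gram_coeff A B C P Q R p q
end

section
/- Weak duality for ε-insensitive smoothing: for every tuple (x̃_0, w̃_0,…,w̃_{N−1}, η̃_1,…,η̃_N) with |η̃_k| ≤ ε componentwise for all k, where x̃_1,…,x̃_N are generated by x̃_{k+1} = A x̃_k + B w̃_k, and for every Θ ∈ ℝ^{Nm}, one has J(x̃_0, w̃, η̃) ≥ −½ΘᵀMΘ − ε̄ᵀ|Θ| + ΘᵀY, where |Θ| is the componentwise absolute value of Θ. -/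
open Matrix

lemma fenchel {d : ℕ} {S : Matrix (Fin d) (Fin d) ℝ} (hS : S.PosDef) (a z : Fin d → ℝ) :
    a ⬝ᵥ z ≤ (1/2) * (z ⬝ᵥ S *ᵥ z) + (1/2) * (a ⬝ᵥ S⁻¹ *ᵥ a) := by
  have hsymm : Sᵀ = S := hS.1
  have hinv : S * S⁻¹ = 1 := S.mul_nonsing_inv (isUnit_iff_ne_zero.mpr hS.det_pos.ne')
  set c := S⁻¹ *ᵥ a with hc
  have hSc : S *ᵥ c = a := by
    rw [hc, mulVec_mulVec, hinv, one_mulVec]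
  have h1 : c ⬝ᵥ S *ᵥ z = a ⬝ᵥ z := by
    rw [dotProduct_mulVec, ← mulVec_transpose, hsymm, hSc]
  have h2 : z ⬝ᵥ S *ᵥ c = a ⬝ᵥ z := by
    rw [hSc, dotProduct_comm]
  have h3 : c ⬝ᵥ S *ᵥ c = a ⬝ᵥ S⁻¹ *ᵥ a := by
    rw [hSc, dotProduct_comm, hc]
  have key : 0 ≤ (z - c) ⬝ᵥ S *ᵥ (z - c) := by
    have := hS.posSemidef.dotProduct_mulVec_nonneg (z - c)
    simpa using this
  rw [mulVec_sub, sub_dotProduct, dotProduct_sub, dotProduct_sub, h1, h2, h3] at key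
  linarith

lemma dot_prod_split {N d : ℕ} (u v : Fin N × Fin d → ℝ) :
    u ⬝ᵥ v = ∑ k : Fin N, (fun j => u (k, j)) ⬝ᵥ (fun j => v (k, j)) := by
  simp [dotProduct, Fintype.sum_prod_type]

lemma blockdiag_quad {N d : ℕ} (D : Matrix (Fin d) (Fin d) ℝ) (v : Fin N × Fin d → ℝ) :
    v ⬝ᵥ (fun p q => if p.1 = q.1 then D p.2 q.2 else 0 :
        Matrix (Fin N × Fin d) (Fin N × Fin d) ℝ) *ᵥ v
      = ∑ k : Fin N, (fun j => v (k, j)) ⬝ᵥ D *ᵥ (fun j => v (k, j)) := by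
  simp [dotProduct, mulVec, Fintype.sum_prod_type, ite_mul, mul_ite, Finset.mul_sum,
    Finset.sum_ite_eq, Finset.sum_ite_eq', mul_assoc]

lemma mulVec_sum' {n p : ℕ} (A : Matrix (Fin n) (Fin p) ℝ) {ι : Type*} (s : Finset ι)
    (f : ι → Fin p → ℝ) : A *ᵥ (∑ i ∈ s, f i) = ∑ i ∈ s, A *ᵥ f i := by
  simpa only [mulVecLin_apply] using map_sum A.mulVecLin f s

lemma traj_eq {n l : ℕ} (A : Matrix (Fin n) (Fin n) ℝ) (B : Matrix (Fin n) (Fin l) ℝ)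
    (x0 : Fin n → ℝ) (w : ℕ → Fin l → ℝ) (k : ℕ) :
    traj A B x0 w k = (A ^ k) *ᵥ x0 + ∑ i ∈ Finset.range k, ((A ^ (k - 1 - i)) * B) *ᵥ w i := by
  induction k with
  | zero => simp [traj]
  | succ k ih =>
      rw [show traj A B x0 w (k+1) = A *ᵥ traj A B x0 w k + B *ᵥ w k from rfl, ih]
      rw [mulVec_add, mulVec_mulVec, ← pow_succ']
      rw [Finset.sum_range_succ]
      have h1 : A *ᵥ ∑ i ∈ Finset.range k, ((A ^ (k - 1 - i)) * B) *ᵥ w i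
          = ∑ i ∈ Finset.range k, ((A ^ (k + 1 - 1 - i)) * B) *ᵥ w i := by
        rw [mulVec_sum']
        refine Finset.sum_congr rfl fun i hi => ?_
        have hik : i < k := Finset.mem_range.mp hi
        have he : k + 1 - 1 - i = (k - 1 - i) + 1 := by omega
        rw [mulVec_mulVec, ← Matrix.mul_assoc, ← pow_succ', he]
      rw [h1]
      simp [add_assoc]

lemma Ctraj_decomp {n l m N : ℕ} (A : Matrix (Fin n) (Fin n) ℝ) (B : Matrix (Fin n) (Fin l) ℝ)
    (C : Matrix (Fin m) (Fin n) ℝ) (xbar xt0 : Fin n → ℝ) (wt : ℕ → Fin l → ℝ)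
    (k : Fin N) (j : Fin m) :
    (C *ᵥ traj A B xt0 wt ((k : ℕ) + 1)) j
      = ((C * A ^ ((k : ℕ) + 1)) *ᵥ xbar) j
        + (Omat N A C *ᵥ (xt0 - xbar)) (k, j)
        + (Fmat N A B C *ᵥ (fun q => wt q.1 q.2)) (k, j) := by
  have hO : (Omat N A C *ᵥ (xt0 - xbar)) (k, j)
      = ((C * A ^ ((k : ℕ) + 1)) *ᵥ (xt0 - xbar)) j := rfl
  set g : ℕ → ℝ := fun i => if i ≤ (k : ℕ) then ((C * A ^ ((k : ℕ) - i) * B) *ᵥ wt i) j else 0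
    with hg
  have hF : (Fmat N A B C *ᵥ (fun q => wt q.1 q.2)) (k, j)
      = ∑ i ∈ Finset.range ((k : ℕ) + 1), ((C * A ^ ((k : ℕ) - i) * B) *ᵥ wt i) j := by
    have h1 : (Fmat N A B C *ᵥ (fun q => wt q.1 q.2)) (k, j) = ∑ i : Fin N, g (i : ℕ) := by
      simp only [mulVec, dotProduct, Fintype.sum_prod_type, Fmat, hg]
      refine Finset.sum_congr rfl fun i _ => ?_
      by_cases h : (i : ℕ) ≤ (k : ℕ) <;> simp [h, mulVec, dotProduct]
    rw [h1, Fin.sum_univ_eq_sum_range g N]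
    rw [← Finset.sum_subset (Finset.range_subset_range.mpr (Nat.succ_le_of_lt k.2))
      (fun i _ hi => by
        have : ¬ i ≤ (k : ℕ) := by simp at hi; omega
        simp [hg, this])]
    refine Finset.sum_congr rfl fun i hi => ?_
    have : i ≤ (k : ℕ) := by have := Finset.mem_range.mp hi; omega
    simp [hg, this]
  rw [hO, hF, traj_eq, mulVec_add, mulVec_mulVec, mulVec_sum', mulVec_sub]
  have h2 : ∑ i ∈ Finset.range ((k : ℕ) + 1), C *ᵥ ((A ^ ((k : ℕ) + 1 - 1 - i) * B) *ᵥ wt i)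
      = ∑ i ∈ Finset.range ((k : ℕ) + 1), ((C * A ^ ((k : ℕ) - i) * B) *ᵥ wt i) := by
    refine Finset.sum_congr rfl fun i hi => ?_
    rw [mulVec_mulVec, ← Matrix.mul_assoc]
    congr 3
  rw [h2]
  simp [Finset.sum_apply]

/-- **Weak duality for ε-insensitive smoothing**: the primal ε-insensitive cost of any feasible
tuple dominates the dual objective `−½ΘᵀMΘ − ε̄ᵀ|Θ| + ΘᵀY` for every `Θ`. -/
theorem eps_insensitive_weak_duality
    (n l m N : ℕ) (hN : 1 ≤ N)
    (A : Matrix (Fin n) (Fin n) ℝ) (B : Matrix (Fin n) (Fin l) ℝ)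
    (C : Matrix (Fin m) (Fin n) ℝ)
    (P : Matrix (Fin n) (Fin n) ℝ) (Q : Matrix (Fin l) (Fin l) ℝ)
    (R : Matrix (Fin m) (Fin m) ℝ)
    (hP : P.PosDef) (hQ : Q.PosDef) (hR : R.PosDef)
    (xbar : Fin n → ℝ) (y : ℕ → Fin m → ℝ)
    (ε : Fin m → ℝ) (hε : ∀ i, 0 < ε i)
    (xt0 : Fin n → ℝ) (wt : ℕ → Fin l → ℝ) (ηt : Fin N → Fin m → ℝ)
    (hηt : ∀ (k : Fin N) (i : Fin m), |ηt k i| ≤ ε i)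
    (Θ : Fin N × Fin m → ℝ) :
    -(1 / 2) * (Θ ⬝ᵥ Mmat N A B C P Q R *ᵥ Θ) - (fun q => ε q.2) ⬝ᵥ (fun q => |Θ q|)
        + Θ ⬝ᵥ Yvec N A C xbar y
      ≤ epsCost N A B C P Q R xbar y xt0 wt ηt := by
  classical
  set δ : Fin n → ℝ := xt0 - xbar with hδ
  set W : Fin N × Fin l → ℝ := fun q => wt q.1 q.2 with hW
  set H : Fin N × Fin m → ℝ := fun p => ηt p.1 p.2 with hH
  set rv : Fin N × Fin m → ℝ := fun p =>
    y ((p.1 : ℕ) + 1) p.2 - (C *ᵥ traj A B xt0 wt ((p.1 : ℕ) + 1)) p.2 - ηt p.1 p.2 with hrv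
  set aP : Fin n → ℝ := (Omat N A C)ᵀ *ᵥ Θ with haP
  set aQ : Fin N × Fin l → ℝ := (Fmat N A B C)ᵀ *ᵥ Θ with haQ
  have hY : Yvec N A C xbar y = rv + Omat N A C *ᵥ δ + Fmat N A B C *ᵥ W + H := by
    funext p
    rcases p with ⟨k, j⟩
    have hD := Ctraj_decomp A B C xbar xt0 wt k j
    simp only [Yvec, Pi.add_apply, hrv, hH, hδ, hW]
    linear_combination hD
  have hM : Θ ⬝ᵥ Mmat N A B C P Q R *ᵥ Θ
      = aQ ⬝ᵥ Qinv N Q *ᵥ aQ + Θ ⬝ᵥ Rinv N R *ᵥ Θ + aP ⬝ᵥ P⁻¹ *ᵥ aP := by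
    simp only [Mmat, add_mulVec, dotProduct_add]
    congr 1
    · congr 1
      rw [← mulVec_mulVec, ← mulVec_mulVec, dotProduct_mulVec, ← mulVec_transpose]
    · rw [← mulVec_mulVec, ← mulVec_mulVec, dotProduct_mulVec, ← mulVec_transpose]
  have hQb : aQ ⬝ᵥ Qinv N Q *ᵥ aQ
      = ∑ k : Fin N, (fun j => aQ (k, j)) ⬝ᵥ Q⁻¹ *ᵥ (fun j => aQ (k, j)) :=
    blockdiag_quad Q⁻¹ aQ
  have hRb : Θ ⬝ᵥ Rinv N R *ᵥ Θ
      = ∑ k : Fin N, (fun j => Θ (k, j)) ⬝ᵥ R⁻¹ *ᵥ (fun j => Θ (k, j)) :=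
    blockdiag_quad R⁻¹ Θ
  have hRsum : Θ ⬝ᵥ rv
      ≤ (1/2) * (∑ k : Fin N, (fun j => rv (k, j)) ⬝ᵥ R *ᵥ (fun j => rv (k, j)))
        + (1/2) * (Θ ⬝ᵥ Rinv N R *ᵥ Θ) := by
    rw [dot_prod_split, hRb, Finset.mul_sum, Finset.mul_sum, ← Finset.sum_add_distrib]
    exact Finset.sum_le_sum fun k _ => fenchel hR _ _
  have hQsum : aQ ⬝ᵥ W
      ≤ (1/2) * (∑ k ∈ Finset.range N, wt k ⬝ᵥ Q *ᵥ wt k)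
        + (1/2) * (aQ ⬝ᵥ Qinv N Q *ᵥ aQ) := by
    rw [dot_prod_split, hQb, ← Fin.sum_univ_eq_sum_range (fun k => wt k ⬝ᵥ Q *ᵥ wt k) N,
      Finset.mul_sum, Finset.mul_sum, ← Finset.sum_add_distrib]
    exact Finset.sum_le_sum fun k _ => fenchel hQ _ _
  have hPineq : aP ⬝ᵥ δ ≤ (1/2) * (δ ⬝ᵥ P *ᵥ δ) + (1/2) * (aP ⬝ᵥ P⁻¹ *ᵥ aP) := fenchel hP aP δ
  have hHineq : Θ ⬝ᵥ H ≤ (fun q => ε q.2) ⬝ᵥ (fun q => |Θ q|) := by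
    simp only [dotProduct]
    refine Finset.sum_le_sum fun q _ => ?_
    calc Θ q * H q ≤ |Θ q * H q| := le_abs_self _
      _ = |Θ q| * |H q| := abs_mul _ _
      _ ≤ |Θ q| * ε q.2 := mul_le_mul_of_nonneg_left (hηt q.1 q.2) (abs_nonneg _)
      _ = ε q.2 * |Θ q| := mul_comm _ _
  have hYdot : Θ ⬝ᵥ Yvec N A C xbar y = Θ ⬝ᵥ rv + aP ⬝ᵥ δ + aQ ⬝ᵥ W + Θ ⬝ᵥ H := by
    rw [hY, dotProduct_add, dotProduct_add, dotProduct_add]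
    congr 2
    congr 1
    · rw [dotProduct_mulVec, ← mulVec_transpose]
    · rw [dotProduct_mulVec, ← mulVec_transpose]
  have hJ : epsCost N A B C P Q R xbar y xt0 wt ηt
      = (1/2) * (δ ⬝ᵥ P *ᵥ δ + (∑ k ∈ Finset.range N, wt k ⬝ᵥ Q *ᵥ wt k)
          + ∑ k : Fin N, (fun j => rv (k, j)) ⬝ᵥ R *ᵥ (fun j => rv (k, j))) := rfl
  linarith [hRsum, hQsum, hPineq, hHineq]
end
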